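/- arXiv:2107.05369 — 3 statements merged into one kernel-verified Lean document; each statement's English description precedes it below -/
import Mathlib

section
/- For m ≥ 2, let q_m be the Boolean conjunctive query whose canonical database is an m × m grid: variables x_{i,j} for i,j ∈ {1,...,m}, with an atom r(x_{i,j}, x_{i',j'}) whenever i+j is even and |i−i'| + |j−j'| = 1, and an atom A_{i,j}(x_{i,j}) for every i,j, where the A_{i,j} are pairwise distinct concept names. Then the canonical database of q_m has treewidth (1, m²) but, for any interpretation U of treewidth (1, m²−1) in which no element satisfies two distinct concept names A_{i,j} and A_{i',j'}, there is no homomorphism from q_m to U. -/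
set_option autoImplicit false

attribute [local instance] Classical.propDecidable

/-! ### Interpretations, databases, homomorphisms -/

structure Interp (C R A : Type) where
  cn : C → A → Prop
  rn : R → A → A → Prop

namespace Interp

variable {C R A : Type}

/-- The active domain of an interpretation/database. -/
def adom (I : Interp C R A) : Set A :=
  {a | (∃ c, I.cn c a) ∨ (∃ r b, I.rn r a b) ∨ (∃ r b, I.rn r b a)}

/-- An interpretation has finitely many facts (this is what makes it a database). -/
def FiniteFacts (I : Interp C R A) : Prop :=
  {p : C × A | I.cn p.1 p.2}.Finite ∧ {t : R × A × A | I.rn t.1 t.2.1 t.2.2}.Finite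

/-- All facts use only symbols from the signature `(SC, SR)`. -/
def InSig (I : Interp C R A) (SC : Set C) (SR : Set R) : Prop :=
  (∀ c a, I.cn c a → c ∈ SC) ∧ (∀ r a b, I.rn r a b → r ∈ SR)

/-- Restriction of an interpretation to a set of elements. -/
def restrict (I : Interp C R A) (s : Set A) : Interp C R A where
  cn c a := a ∈ s ∧ I.cn c a
  rn r a b := a ∈ s ∧ b ∈ s ∧ I.rn r a b

/-- Semantics of (possibly inverse) roles: `Sum.inl r` is `r`, `Sum.inr r` is `r⁻`. -/
def roleE (I : Interp C R A) : R ⊕ R → A → A → Prop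
  | .inl r, a, b => I.rn r a b
  | .inr r, a, b => I.rn r b a

/-- The undirected graph underlying an interpretation. -/
def graphOf (I : Interp C R A) : SimpleGraph A where
  Adj a b := a ≠ b ∧ ∃ r, I.rn r a b ∨ I.rn r b a
  symm := ⟨by rintro a b ⟨hne, r, hr⟩; exact ⟨hne.symm, r, hr.symm⟩⟩
  loopless := ⟨by rintro a ⟨hne, -⟩; exact hne rfl⟩

/-- A database/interpretation is a tree: the underlying graph is acyclic,
there are no self loops and no multi-edges (trees need not be connected). -/
def IsTree (I : Interp C R A) : Prop :=
  I.graphOf.IsAcyclic ∧ (∀ r a, ¬ I.rn r a a) ∧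
    (∀ (ρ₁ ρ₂ : R ⊕ R) (a b : A), ρ₁ ≠ ρ₂ → I.roleE ρ₁ a b → ¬ I.roleE ρ₂ a b)

end Interp

/-- Homomorphisms between interpretations. -/
structure Hom {C R A B : Type} (I : Interp C R A) (J : Interp C R B) where
  toFun : A → B
  map_cn : ∀ c a, I.cn c a → J.cn c (toFun a)
  map_rn : ∀ r a b, I.rn r a b → J.rn r (toFun a) (toFun b)

/-! ### Tree decompositions and treewidth -/

/-- An `(ℓ,k)`-tree decomposition of an interpretation: an undirected tree `(V,G)`
with bags of size at most `k`, pairwise overlaps of size at most `ℓ`, every active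
element appearing in a nonempty connected set of bags, and every role edge
contained in some bag. -/
structure TreeDecomp {C R A : Type} (I : Interp C R A) (ℓ k : ℕ) where
  V : Type
  G : SimpleGraph V
  conn : G.Connected
  acyc : G.IsAcyclic
  bag : V → Set A
  cover : ∀ a ∈ I.adom, (G.induce {v | a ∈ bag v}).Connected
  edges : ∀ r a b, I.rn r a b → ∃ v, a ∈ bag v ∧ b ∈ bag v
  bagFin : ∀ v, (bag v).Finite
  bagCard : ∀ v, (bag v).ncard ≤ k
  overlap : ∀ v w, v ≠ w → (bag v ∩ bag w).ncard ≤ ℓ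

/-- `I` has treewidth `(ℓ,k)`. -/
def HasTW {C R A : Type} (I : Interp C R A) (ℓ k : ℕ) : Prop :=
  Nonempty (TreeDecomp I ℓ k)

/-! ### Conjunctive queries and UCQs -/

/-- A conjunctive query with `m` answer variables (`Fin m`) and quantified
variables `V`. -/
structure CQ (C R : Type) (m : ℕ) where
  V : Type
  cnAtoms : Set (C × (Fin m ⊕ V))
  rnAtoms : Set (R × (Fin m ⊕ V) × (Fin m ⊕ V))

namespace CQ

variable {C R A : Type} {m : ℕ}

/-- `I ⊨ q(atup)`. -/
def Eval (q : CQ C R m) (I : Interp C R A) (atup : Fin m → A) : Prop :=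
  ∃ h : Fin m ⊕ q.V → A, (∀ i, h (.inl i) = atup i) ∧
    (∀ p ∈ q.cnAtoms, I.cn p.1 (h p.2)) ∧
    (∀ t ∈ q.rnAtoms, I.rn t.1 (h t.2.1) (h t.2.2))

/-- The canonical database of a CQ (all variables as constants). -/
def canon (q : CQ C R m) : Interp C R (Fin m ⊕ q.V) where
  cn c x := (c, x) ∈ q.cnAtoms
  rn r x y := (r, x, y) ∈ q.rnAtoms

/-- The treewidth of a CQ: the treewidth of its canonical database restricted to
the quantified variables (answer variables do not contribute). -/
def HasTWq (q : CQ C R m) (ℓ k : ℕ) : Prop :=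
  HasTW (q.canon.restrict (Set.range Sum.inr)) ℓ k

end CQ

/-- A union of conjunctive queries, as an indexed family of CQs of the same arity. -/
structure UCQ (C R : Type) (m : ℕ) where
  ι : Type
  d : ι → CQ C R m

def UCQ.Eval {C R A : Type} {m : ℕ} (q : UCQ C R m) (I : Interp C R A)
    (atup : Fin m → A) : Prop :=
  ∃ i, (q.d i).Eval I atup

/-! ### Certain answers (generic in the ontology semantics) -/

/-- `atup` is a certain answer on `D` for query semantics `Ev`, w.r.t. all
(nonempty) models satisfying `Mod`: under the standard-names-free reading,
models of `D` are interpretations together with a homomorphism from `D`. -/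
def Certain {C R A : Type} {m : ℕ} (Mod : ∀ Δ : Type, Interp C R Δ → Prop)
    (D : Interp C R A) (Ev : ∀ Δ : Type, Interp C R Δ → (Fin m → Δ) → Prop)
    (atup : Fin m → A) : Prop :=
  ∀ (Δ : Type), Nonempty Δ → ∀ I : Interp C R Δ, Mod Δ I →
    ∀ h : Hom D I, Ev Δ I (fun i => h.toFun (atup i))

/-- `D` is satisfiable w.r.t. the class of models described by `Mod`. -/
def Satisfiable {C R A : Type} (Mod : ∀ Δ : Type, Interp C R Δ → Prop)
    (D : Interp C R A) : Prop :=
  ∃ (Δ : Type) (_ : Nonempty Δ) (I : Interp C R Δ), Nonempty (Hom D I) ∧ Mod Δ I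

/-! ### First-order logic (no equality, no constants) -/

inductive FO (C R : Type) : ℕ → Type
  | cn {n : ℕ} (c : C) (i : Fin n) : FO C R n
  | rn {n : ℕ} (r : R) (i j : Fin n) : FO C R n
  | fls {n : ℕ} : FO C R n
  | imp {n : ℕ} (φ ψ : FO C R n) : FO C R n
  | all {n : ℕ} (φ : FO C R (n+1)) : FO C R n

def FO.Eval {C R A : Type} (I : Interp C R A) : {n : ℕ} → FO C R n → (Fin n → A) → Prop
  | _, .cn c i, v => I.cn c (v i)
  | _, .rn r i j, v => I.rn r (v i) (v j)
  | _, .fls, _ => False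
  | _, .imp φ ψ, v => φ.Eval I v → ψ.Eval I v
  | _, .all φ, v => ∀ a, φ.Eval I (Fin.cons a v)

/-- `I` is a model of the FO ontology `O`. -/
def ModelsFO {C R A : Type} (I : Interp C R A) (O : Set (FO C R 0)) : Prop :=
  ∀ φ ∈ O, φ.Eval I (fun i => i.elim0)

/-- `O ⊨ O'` for FO ontologies. -/
def FOEntails {C R : Type} (O O' : Set (FO C R 0)) : Prop :=
  ∀ (Δ : Type), Nonempty Δ → ∀ I : Interp C R Δ, ModelsFO I O → ModelsFO I O'

/-! ### Tuple-generating dependencies -/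

/-- A TGD with `n` frontier variables, whose body and head are CQs with the
frontier variables as answer variables; `head = none` stands for `⊥`. -/
structure TGD (C R : Type) where
  n : ℕ
  body : CQ C R n
  head : Option (CQ C R n)

def TGD.Sat {C R A : Type} (t : TGD C R) (I : Interp C R A) : Prop :=
  ∀ v : Fin t.n → A, t.body.Eval I v →
    match t.head with
    | some ψ => ψ.Eval I v
    | none => False

def ModelsTGDSet {C R A : Type} (I : Interp C R A) (O : Set (TGD C R)) : Prop :=
  ∀ t ∈ O, t.Sat I

/-! ### Description logic concepts -/

/-- `ELIU` concepts with ⊥, possibly disjunction and the universal role. -/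
inductive ELIU (C R : Type) : Type
  | top
  | bot
  | cn (c : C)
  | inter (X Y : ELIU C R)
  | union (X Y : ELIU C R)
  | exR (ρ : R ⊕ R) (X : ELIU C R)
  | exU (X : ELIU C R)

namespace ELIU

variable {C R A : Type}

def sem (I : Interp C R A) : ELIU C R → A → Prop
  | .top, _ => True
  | .bot, _ => False
  | .cn c, a => I.cn c a
  | .inter X Y, a => X.sem I a ∧ Y.sem I a
  | .union X Y, a => X.sem I a ∨ Y.sem I a
  | .exR ρ X, a => ∃ b, I.roleE ρ a b ∧ X.sem I b
  | .exU X, _ => ∃ b, X.sem I b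

def uFree : ELIU C R → Prop
  | .top => True
  | .bot => True
  | .cn _ => True
  | .inter X Y => X.uFree ∧ Y.uFree
  | .union X Y => X.uFree ∧ Y.uFree
  | .exR _ X => X.uFree
  | .exU _ => False

def disjFree : ELIU C R → Prop
  | .top => True
  | .bot => True
  | .cn _ => True
  | .inter X Y => X.disjFree ∧ Y.disjFree
  | .union _ _ => False
  | .exR _ X => X.disjFree
  | .exU X => X.disjFree

def botFree : ELIU C R → Prop
  | .top => True
  | .bot => False
  | .cn _ => True
  | .inter X Y => X.botFree ∧ Y.botFree
  | .union X Y => X.botFree ∧ Y.botFree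
  | .exR _ X => X.botFree
  | .exU X => X.botFree

end ELIU

/-- A concept inclusion is an `ELI_⊥` CI (no disjunction, no universal role). -/
def ELIbotCI {C R : Type} (p : ELIU C R × ELIU C R) : Prop :=
  p.1.disjFree ∧ p.1.uFree ∧ p.2.disjFree ∧ p.2.uFree

/-- A concept inclusion is an `ELI` CI. -/
def ELICI {C R : Type} (p : ELIU C R × ELIU C R) : Prop :=
  ELIbotCI p ∧ p.1.botFree ∧ p.2.botFree

def ModelsELIUOnt {C R A : Type} (I : Interp C R A)
    (T : Set (ELIU C R × ELIU C R)) : Prop :=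
  ∀ p ∈ T, ∀ a, p.1.sem I a → p.2.sem I a

def EntailsELIU {C R : Type} (T T' : Set (ELIU C R × ELIU C R)) : Prop :=
  ∀ (Δ : Type), Nonempty Δ → ∀ I : Interp C R Δ, ModelsELIUOnt I T → ModelsELIUOnt I T'

/-- `ALCI` concepts. -/
inductive ALCI (C R : Type) : Type
  | top
  | cn (c : C)
  | neg (X : ALCI C R)
  | inter (X Y : ALCI C R)
  | exR (ρ : R ⊕ R) (X : ALCI C R)

namespace ALCI

variable {C R A : Type}

def sem (I : Interp C R A) : ALCI C R → A → Prop
  | .top, _ => True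
  | .cn c, a => I.cn c a
  | .neg X, a => ¬ X.sem I a
  | .inter X Y, a => X.sem I a ∧ Y.sem I a
  | .exR ρ X, a => ∃ b, I.roleE ρ a b ∧ X.sem I b

/-- `C ⊔ D` as an abbreviation. -/
def unionA (X Y : ALCI C R) : ALCI C R := .neg (.inter (.neg X) (.neg Y))

/-- `∀r.C` as an abbreviation. -/
def allR (r : R) (X : ALCI C R) : ALCI C R := .neg (.exR (.inl r) (.neg X))

/-- `∃rⁿ.C` (n-fold nesting). -/
def exPow (r : R) : ℕ → ALCI C R → ALCI C R
  | 0, X => X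
  | n+1, X => .exR (.inl r) (exPow r n X)

end ALCI

def ModelsALCIOnt {C R A : Type} (I : Interp C R A)
    (O : Set (ALCI C R × ALCI C R)) : Prop :=
  ∀ p ∈ O, ∀ a, p.1.sem I a → p.2.sem I a

def EntailsALCI {C R : Type} (O O' : Set (ALCI C R × ALCI C R)) : Prop :=
  ∀ (Δ : Type), Nonempty Δ → ∀ I : Interp C R Δ, ModelsALCIOnt I O → ModelsALCIOnt I O'

/-- The set `O≈` of all `ELI^u_⊥` concept inclusions entailed by the ALCI
ontology `O`. -/
def ELIuApprox {C R : Type} (O : Set (ALCI C R × ALCI C R)) :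
    Set (ELIU C R × ELIU C R) :=
  {p | p.1.disjFree ∧ p.2.disjFree ∧
    ∀ (Δ : Type), Nonempty Δ → ∀ I : Interp C R Δ, ModelsALCIOnt I O →
      ∀ a, p.1.sem I a → p.2.sem I a}

/-! ### bELIQs -/

/-- A bELIQ: either an ELIQ `C(x)` (unary) or a Boolean ELIQ `∃u.C`. -/
inductive BELIQ (C R : Type) : Type
  | q1 (X : ELIU C R)
  | q0 (X : ELIU C R)

namespace BELIQ

variable {C R A : Type}

def arity : BELIQ C R → ℕ
  | .q1 _ => 1
  | .q0 _ => 0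

/-- Well-formedness: the underlying concept is an `ELI` concept. -/
def wf : BELIQ C R → Prop
  | .q1 X => X.disjFree ∧ X.uFree ∧ X.botFree
  | .q0 X => X.disjFree ∧ X.uFree ∧ X.botFree

def Eval : (q : BELIQ C R) → Interp C R A → (Fin q.arity → A) → Prop
  | .q1 X, I, v => X.sem I (v ⟨0, Nat.zero_lt_one⟩)
  | .q0 X, I, _ => ∃ a, X.sem I a

end BELIQ

/-! ### Tree unraveling -/

/-- Paths in a database, indexed by their tail. -/
inductive UPath {C R A : Type} (I : Interp C R A) : A → Type
  | nil (a : A) : UPath I a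
  | cons {a : A} (p : UPath I a) (ρ : R ⊕ R) (b : A) (h : I.roleE ρ a b) : UPath I b

/-- The tree unraveling `D≈_S` of `D` at `S`: it contains all facts of `D|_S`,
the facts along paths, and the connecting facts between `S` and paths. -/
def treeUnravel {C R A : Type} (D : Interp C R A) (S : Set A) :
    Interp C R (A ⊕ (Σ a : A, UPath D a)) where
  cn c x :=
    match x with
    | .inl a => a ∈ S ∧ D.cn c a
    | .inr p => D.cn c p.1
  rn r x y :=
    (∃ a b, a ∈ S ∧ b ∈ S ∧ D.rn r a b ∧ x = .inl a ∧ y = .inl b) ∨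
    (∃ (a : A) (p : UPath D a) (b : A) (h : D.roleE (.inl r) a b),
        x = .inr ⟨a, p⟩ ∧ y = .inr ⟨b, p.cons (.inl r) b h⟩) ∨
    (∃ (a : A) (p : UPath D a) (b : A) (h : D.roleE (.inr r) a b),
        y = .inr ⟨a, p⟩ ∧ x = .inr ⟨b, p.cons (.inr r) b h⟩) ∨
    (∃ (a b : A) (p : UPath D b), a ∈ S ∧ D.rn r a b ∧ x = .inl a ∧ y = .inr ⟨b, p⟩) ∨
    (∃ (a b : A) (p : UPath D b), a ∈ S ∧ D.rn r b a ∧ x = .inr ⟨b, p⟩ ∧ y = .inl a)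

/-! ### (ℓ,k)-unraveling -/

/-- Admissibility of a bag `T` in an `(ℓ,k)`-sequence: `S ⊆ T ⊆ adom(D)` and
`|T \ S| ≤ k`. -/
def SeqOk {C R A : Type} (D : Interp C R A) (S : Set A) (k : ℕ) (T : Set A) : Prop :=
  S ⊆ T ∧ T ⊆ D.adom ∧ (T \ S).Finite ∧ (T \ S).ncard ≤ k

/-- `(ℓ,k)`-sequences `S₀,O₀,S₁,…,Sₙ`, indexed by the last bag `Sₙ`. -/
inductive LKSeq {C R A : Type} (D : Interp C R A) (S : Set A) (ℓ k : ℕ) : Set A → Type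
  | first (S₀ : Set A) (h : SeqOk D S k S₀) : LKSeq D S ℓ k S₀
  | step {T : Set A} (v : LKSeq D S ℓ k T) (O T' : Set A)
      (hO : S ⊆ O) (hOT : O ⊆ T ∩ T') (hOf : (O \ S).Finite)
      (hOl : (O \ S).ncard ≤ ℓ) (hT' : SeqOk D S k T') : LKSeq D S ℓ k T'

/-- Elements of the `(ℓ,k)`-unraveling: elements of `S` keep their names
(`Sum.inl`), all other copies are identified by the sequence at which they are
introduced. -/
abbrev LKElem {C R A : Type} (D : Interp C R A) (S : Set A) (ℓ k : ℕ) : Type :=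
  A ⊕ (Σ T : Set A, LKSeq D S ℓ k T × A)

/-- The copy `a_v` of `a` in the bag of the sequence `v`. -/
noncomputable def LKSeq.rep {C R A : Type} {D : Interp C R A} {S : Set A} {ℓ k : ℕ} :
    {T : Set A} → LKSeq D S ℓ k T → A → LKElem D S ℓ k
  | _, .first S₀ h, a =>
      if a ∈ S then Sum.inl a else Sum.inr ⟨S₀, (LKSeq.first S₀ h, a)⟩
  | _, .step v O T' h1 h2 h3 h4 h5, a =>
      if a ∈ S then Sum.inl a
      else if a ∈ O then v.rep a
      else Sum.inr ⟨T', (LKSeq.step v O T' h1 h2 h3 h4 h5, a)⟩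

/-- The `(ℓ,k)`-unraveling `D≈_{S,ℓ,k}` of `D` up to `S`. -/
noncomputable def unravelLK {C R A : Type} (D : Interp C R A) (S : Set A) (ℓ k : ℕ) :
    Interp C R (LKElem D S ℓ k) where
  cn c x := ∃ (T : Set A) (v : LKSeq D S ℓ k T) (a : A),
      a ∈ T ∧ x = v.rep a ∧ D.cn c a
  rn r x y := ∃ (T : Set A) (v : LKSeq D S ℓ k T) (a b : A),
      a ∈ T ∧ b ∈ T ∧ x = v.rep a ∧ y = v.rep b ∧ D.rn r a b

/-- The uncopying map. -/
def uncopyLK {C R A : Type} {D : Interp C R A} {S : Set A} {ℓ k : ℕ} :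
    LKElem D S ℓ k → A
  | .inl a => a
  | .inr x => x.2.2

/-- `x` is a copy of `a` in the `(ℓ,k)`-unraveling. -/
def IsCopyLK {C R A : Type} {D : Interp C R A} {S : Set A} {ℓ k : ℕ}
    (x : LKElem D S ℓ k) (a : A) : Prop :=
  ∃ (T : Set A) (v : LKSeq D S ℓ k T), a ∈ T ∧ x = v.rep a

/-- The frontier-one `ℓ,k,ℓ',k'`-TGDs entailed by the ALCI ontology `O`. -/
def approxTGDs {C R : Type} (O : Set (ALCI C R × ALCI C R)) (ℓ k ℓ' k' : ℕ) :
    Set (TGD C R) :=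
  {t | t.n ≤ 1 ∧ HasTW t.body.canon ℓ k ∧
       (∀ ψ, t.head = some ψ → HasTW ψ.canon ℓ' k') ∧
       ∀ (Δ : Type), Nonempty Δ → ∀ I : Interp C R Δ, ModelsALCIOnt I O → t.Sat I}

/-! ### The disjunct operation f and the approximation set E_O -/

def fDisj {C R : Type} : ELIU C R → Set (ELIU C R)
  | .top => {ELIU.top}
  | .bot => {ELIU.bot}
  | .cn c => {ELIU.cn c}
  | .inter X Y => {Z | ∃ X' ∈ fDisj X, ∃ Y' ∈ fDisj Y, Z = ELIU.inter X' Y'}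
  | .union X Y => fDisj X ∪ fDisj Y
  | .exR ρ X => {Z | ∃ X' ∈ fDisj X, Z = ELIU.exR ρ X'}
  | .exU X => {Z | ∃ X' ∈ fDisj X, Z = ELIU.exU X'}

/-- The rewriting of `O` replacing each `C ⊑ D` by `{C' ⊑ D : C' ∈ f(C)}`. -/
def rewriteO {C R : Type} (O : Set (ELIU C R × ELIU C R)) :
    Set (ELIU C R × ELIU C R) :=
  {p | ∃ q ∈ O, p.2 = q.2 ∧ p.1 ∈ fDisj q.1}

/-- `E_O`: all ontologies obtained by choosing, for each inclusion `C' ⊑ D` of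
the rewriting, one inclusion `C' ⊑ D'` with `D' ∈ f(D)`. -/
def EO {C R : Type} (O : Set (ELIU C R × ELIU C R)) :
    Set (Set (ELIU C R × ELIU C R)) :=
  {Oh | ∃ g : ELIU C R × ELIU C R → ELIU C R,
      (∀ p ∈ rewriteO O, g p ∈ fDisj p.2) ∧
      Oh = {q | ∃ p ∈ rewriteO O, q = (p.1, g p)}}

/-! ### Direct products -/

def prodInterp {C R : Type} {n : ℕ} {A : Fin n → Type}
    (I : ∀ i, Interp C R (A i)) : Interp C R (∀ i, A i) where
  cn c f := ∀ i, (I i).cn c (f i)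
  rn r f g := ∀ i, (I i).rn r (f i) (g i)

/-! ### Concrete databases and queries for specific statements -/

/-- The grid CQ `q_m` of Statement 16, as its canonical database. -/
def gridDB {C R : Type} (m : ℕ) (r : R) (Aname : Fin m × Fin m → C) :
    Interp C R (Fin m × Fin m) where
  cn c p := c = Aname p
  rn ρ p q := ρ = r ∧ Even (p.1.1 + p.2.1) ∧
    ((p.1.1 : ℤ) - (q.1.1 : ℤ)).natAbs + ((p.2.1 : ℤ) - (q.2.1 : ℤ)).natAbs = 1

/-- The 3-cycle database of Statement 19. -/
def cycleDB {C R : Type} (nA : Fin 3 → C) (r : R) : Interp C R (Fin 3) where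
  cn c i := c = nA i
  rn ρ i j := ρ = r ∧ j = i + 1

/-- The ontology `{Aᵢ ⊓ Aⱼ ⊑ B : 1 ≤ i < j ≤ 3}` of Statement 19. -/
def cycleOnt {C R : Type} (nA : Fin 3 → C) (nB : C) : Set (ELIU C R × ELIU C R) :=
  {p | ∃ i j : Fin 3, i < j ∧
    p = (ELIU.inter (ELIU.cn (nA i)) (ELIU.cn (nA j)), ELIU.cn nB)}

/-- The Boolean CQ `∃x B(x)` of Statement 19. -/
def existsB {C R : Type} (nB : C) : CQ C R 0 where
  V := Unit
  cnAtoms := {(nB, Sum.inr ())}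
  rnAtoms := ∅

/-- The ontology `O = {∃r.⊤ ⊓ ∀r.A ⊑ B₁ ⊔ B₂}` of Statement 14. -/
def O14 {C R : Type} (a b1 b2 : C) (r : R) : Set (ALCI C R × ALCI C R) :=
  {(ALCI.inter (ALCI.exR (.inl r) ALCI.top) (ALCI.allR r (ALCI.cn a)),
    ALCI.unionA (ALCI.cn b1) (ALCI.cn b2))}

/-- The ontology `O_n` of Statement 14. -/
def O14n {C R : Type} (a b1 x : C) (r : R) (n : ℕ) : Set (ALCI C R × ALCI C R) :=
  {(ALCI.exR (.inl r) (ALCI.cn a), ALCI.exPow r n (ALCI.cn x)),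
   (ALCI.exR (.inl r) (ALCI.inter (ALCI.cn a) (ALCI.exPow r (n-1) (ALCI.cn x))),
    ALCI.cn b1)}

namespace Stmt16Aux
open SimpleGraph

open SimpleGraph

variable {V : Type}

/-- split a walk at the first vertex (from the far end... actually from start) -/
lemma split_first' {H : SimpleGraph V} (S : V → Prop) :
    ∀ {x y : V} (p : H.Walk x y), S y → ¬ S x →
    ∃ (v w : V) (q : H.Walk x w), H.Adj w v ∧ S v ∧ ¬ S w ∧ v ∉ q.support := by
  intro x y p
  induction p with
  | nil => intro h h'; exact absurd h h'
  | @cons x b y h p ih =>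
    intro hy hx
    by_cases hb : S b
    · exact ⟨b, x, Walk.nil, h, hb, hx, by simp [h.ne']⟩
    · obtain ⟨v, w, q, hadj, hvS, hwS, hvq⟩ := ih hy hb
      refine ⟨v, w, Walk.cons h q, hadj, hvS, hwS, ?_⟩
      simp only [Walk.support_cons, List.mem_cons, not_or]
      exact ⟨fun hvx => hx (hvx ▸ hvS), hvq⟩

lemma walk_pair {H : SimpleGraph V} (P : V → Prop) :
    ∀ {x y : V} (p : H.Walk x y), P x → ¬ P y →
    ∃ a b, H.Adj a b ∧ a ∈ p.support ∧ b ∈ p.support ∧ P a ∧ ¬ P b := by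
  intro x y p
  induction p with
  | nil => intro h h'; exact absurd h h'
  | @cons x b y h p ih =>
    intro hx hy
    by_cases hb : P b
    · obtain ⟨a, c, hadj, ha, hc, hPa, hPc⟩ := ih hb hy
      exact ⟨a, c, hadj, by simp [ha], by simp [hc], hPa, hPc⟩
    · exact ⟨x, b, h, by simp, by simp [Walk.start_mem_support], hx, hb⟩

lemma rtg_pair {α : Type} (R : α → α → Prop) (P : α → Prop) {x y : α}
    (h : Relation.ReflTransGen R x y) (hx : P x) (hy : ¬ P y) :
    ∃ a b, R a b ∧ P a ∧ ¬ P b := by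
  induction h with
  | refl => exact absurd hx hy
  | @tail b c hxb hbc ih =>
    by_cases hb : P b
    · exact ⟨b, c, hbc, hb, hy⟩
    · exact ih hb

variable {G : SimpleGraph V}

noncomputable def thePath (hconn : G.Connected) (x y : V) : G.Walk x y :=
  (Classical.choice ((hconn.preconnected x y) : Nonempty (G.Walk x y))).bypass

lemma thePath_isPath (hconn : G.Connected) (x y : V) : (thePath hconn x y).IsPath :=
  Walk.bypass_isPath _

lemma eq_thePath (hconn : G.Connected) (hacyc : G.IsAcyclic) {x y : V}
    {p : G.Walk x y} (hp : p.IsPath) : p = thePath hconn x y := by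
  have := hacyc.path_unique ⟨p, hp⟩ ⟨thePath hconn x y, thePath_isPath hconn x y⟩
  exact congrArg Subtype.val this

lemma support_thePath_subset (hconn : G.Connected) (hacyc : G.IsAcyclic) {x y : V}
    (w : G.Walk x y) : (thePath hconn x y).support ⊆ w.support := by
  rw [← eq_thePath hconn hacyc w.bypass_isPath]
  exact w.support_bypass_subset


/-- split a walk at the first vertex satisfying S (S holds at the end). -/
lemma split_head {H : SimpleGraph V} (S : V → Prop) :
    ∀ {x y : V} (p : H.Walk x y), S y →
    ∃ (a : V) (w₁ : H.Walk x a) (w₂ : H.Walk a y),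
      w₁.append w₂ = p ∧ S a ∧ ∀ b ∈ w₁.support, b ≠ a → ¬ S b := by
  intro x y p
  induction p with
  | nil =>
    intro hy
    exact ⟨_, Walk.nil, Walk.nil, rfl, hy, by simp +contextual⟩
  | @cons x b y h p ih =>
    intro hy
    by_cases hx : S x
    · exact ⟨x, Walk.nil, Walk.cons h p, rfl, hx, by simp +contextual⟩
    · obtain ⟨a, w₁, w₂, happ, ha, hmin⟩ := ih hy
      refine ⟨a, Walk.cons h w₁, w₂, by rw [Walk.cons_append, happ], ha, ?_⟩
      intro c hc hca
      rcases (by simpa using hc : c = x ∨ c ∈ w₁.support) with rfl | hc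
      · exact hx
      · exact hmin c hc hca

lemma median (hconn : G.Connected) (hacyc : G.IsAcyclic) (x y z : V) :
    ∃ a, a ∈ (thePath hconn x y).support ∧ a ∈ (thePath hconn x z).support ∧
      a ∈ (thePath hconn y z).support := by
  classical
  set Pxy := thePath hconn x y with hPxy
  set Pyz := thePath hconn y z with hPyz
  obtain ⟨a, w₁, w₂, happ, haS, hmin⟩ :=
    split_head (fun u => u ∈ Pyz.support) Pxy (Walk.start_mem_support _)
  have hPxyp : Pxy.IsPath := thePath_isPath hconn x y
  have hw₁p : w₁.IsPath := by
    have := hPxyp; rw [← happ] at this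
    exact this.of_append_left
  set u₂ := Pyz.dropUntil a haS with hu₂
  have hu₂p : u₂.IsPath := (thePath_isPath hconn y z).dropUntil haS
  have hW : (w₁.append u₂).IsPath := by
    rw [Walk.isPath_def, Walk.support_append]
    refine List.Nodup.append hw₁p.support_nodup ?_ ?_
    · exact hu₂p.support_nodup.tail
    · intro b hb1 hb2
      have hb2' : b ∈ u₂.support := List.mem_of_mem_tail hb2
      have hbS : b ∈ Pyz.support := Pyz.support_dropUntil_subset haS hb2'
      have hba : b = a := by
        by_contra hba
        exact hmin b hb1 hba hbS
      subst hba
      have : u₂.support = b :: u₂.support.tail := u₂.support_eq_cons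
      have := hu₂p.support_nodup
      rw [u₂.support_eq_cons] at this
      exact (List.nodup_cons.mp this).1 hb2
  have hWeq : w₁.append u₂ = thePath hconn x z := eq_thePath hconn hacyc hW
  refine ⟨a, ?_, ?_, haS⟩
  · rw [← happ, Walk.mem_support_append_iff]
    exact Or.inl w₁.end_mem_support
  · rw [← hWeq, Walk.mem_support_append_iff]
    exact Or.inl w₁.end_mem_support

/-- A set closed under canonical paths. -/
def Closed (hconn : G.Connected) (S : Set V) : Prop :=
  ∀ x ∈ S, ∀ y ∈ S, ∀ u ∈ (thePath hconn x y).support, u ∈ S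

lemma helly (hconn : G.Connected) (hacyc : G.IsAcyclic) :
    ∀ (n : ℕ) (L : List (Set V)), L.length ≤ n → L ≠ [] →
    (∀ S ∈ L, Closed hconn S ∧ S.Nonempty) →
    (∀ S ∈ L, ∀ T ∈ L, (S ∩ T).Nonempty) →
    ∃ u, ∀ S ∈ L, u ∈ S := by
  intro n
  induction n with
  | zero => intro L hL hne _ _; cases L with
    | nil => exact absurd rfl hne
    | cons a l => simp at hL
  | succ n ih =>
    intro L hL hne hcl hpair
    match L with
    | [] => exact absurd rfl hne
    | [S] =>
      obtain ⟨u, hu⟩ := (hcl S (by simp)).2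
      exact ⟨u, by simpa using hu⟩
    | S :: T :: rest =>
      have hST : Closed hconn (S ∩ T) ∧ (S ∩ T).Nonempty := by
        refine ⟨?_, hpair S (by simp) T (by simp)⟩
        intro x hx y hy u hu
        exact ⟨(hcl S (by simp)).1 x hx.1 y hy.1 u hu,
               (hcl T (by simp)).1 x hx.2 y hy.2 u hu⟩
      have key : ∀ Q ∈ rest, ((S ∩ T) ∩ Q).Nonempty := by
        intro Q hQ
        obtain ⟨a, haS, haT⟩ := hpair S (by simp) T (by simp)
        obtain ⟨b, hbS, hbQ⟩ := hpair S (by simp) Q (by simp [hQ])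
        obtain ⟨c, hcT, hcQ⟩ := hpair T (by simp) Q (by simp [hQ])
        obtain ⟨u, hab, hac, hbc⟩ := median hconn hacyc a b c
        refine ⟨u, ⟨?_, ?_⟩, ?_⟩
        · exact (hcl S (by simp)).1 a haS b hbS u hab
        · exact (hcl T (by simp)).1 a haT c hcT u hac
        · exact (hcl Q (by simp [hQ])).1 b hbQ c hcQ u hbc
      obtain ⟨u, hu⟩ := ih ((S ∩ T) :: rest) (by simp at hL ⊢; omega) (by simp)
        (by
          rintro Q hQ
          rcases List.mem_cons.mp hQ with rfl | hQ
          · exact hST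
          · exact hcl Q (by simp [hQ]))
        (by
          rintro Q hQ Q' hQ'
          rcases List.mem_cons.mp hQ with rfl | hQ <;>
            rcases List.mem_cons.mp hQ' with rfl | hQ'
          · obtain ⟨a, ha⟩ := hST.2; exact ⟨a, ha, ha⟩
          · exact key Q' hQ'
          · obtain ⟨a, h1, h2⟩ := key Q hQ; exact ⟨a, h2, h1⟩
          · exact hpair Q (by simp [hQ]) Q' (by simp [hQ']))
      have huST := hu (S ∩ T) (by simp)
      refine ⟨u, ?_⟩
      intro Q hQ
      rcases List.mem_cons.mp hQ with rfl | hQ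
      · exact huST.1
      rcases List.mem_cons.mp hQ with rfl | hQ
      · exact huST.2
      · exact hu Q (by simp [hQ])



open SimpleGraph

variable {V : Type} {G : SimpleGraph V}

lemma side_total (hconn : G.Connected) {v w : V} :
    ∀ u, (G.deleteEdges {s(v,w)}).Reachable u v ∨ (G.deleteEdges {s(v,w)}).Reachable u w := by
  have main : ∀ {x y : V} (_ : G.Walk x y),
      ((G.deleteEdges {s(v,w)}).Reachable y v ∨ (G.deleteEdges {s(v,w)}).Reachable y w) →
      ((G.deleteEdges {s(v,w)}).Reachable x v ∨ (G.deleteEdges {s(v,w)}).Reachable x w) := by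
    intro x y p
    induction p with
    | nil => exact id
    | @cons x b y h p ih =>
      intro hyp
      by_cases he : s(x, b) = s(v, w)
      · rcases Sym2.eq_iff.mp he with ⟨rfl, rfl⟩ | ⟨rfl, rfl⟩
        · exact Or.inl (Reachable.refl _)
        · exact Or.inr (Reachable.refl _)
      · have hadj : (G.deleteEdges {s(v,w)}).Adj x b :=
          SimpleGraph.deleteEdges_adj.mpr ⟨h, by simpa using he⟩
        rcases ih hyp with hr | hr
        · exact Or.inl (hadj.reachable.trans hr)
        · exact Or.inr (hadj.reachable.trans hr)
  intro u
  obtain ⟨p⟩ := hconn.preconnected u v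
  exact main p (Or.inl (Reachable.refl _))

lemma side_not_both (hacyc : G.IsAcyclic) {v w : V} (hvw : G.Adj v w) :
    ¬ (G.deleteEdges {s(v,w)}).Reachable v w := by
  rintro ⟨p⟩
  have hp : p.bypass.IsPath := Walk.bypass_isPath _
  have hed : ∀ e ∈ p.bypass.edges, e ∈ G.edgeSet := by
    intro e he
    have := p.bypass.edges_subset_edgeSet he
    rw [SimpleGraph.edgeSet_deleteEdges] at this
    exact this.1
  have hne : s(v,w) ∉ p.bypass.edges := by
    intro hmem
    have := p.bypass.edges_subset_edgeSet hmem
    rw [SimpleGraph.edgeSet_deleteEdges] at this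
    exact this.2 rfl
  set q : G.Walk v w := p.bypass.transfer G hed with hq
  have hqp : q.IsPath := hp.transfer hed
  have hqe : s(w,v) ∉ q.edges := by
    intro hmem
    rw [hq, Walk.edges_transfer] at hmem
    apply hne
    have hswap : s(w,v) = s(v,w) := Sym2.eq_swap
    rwa [hswap] at hmem
  exact hacyc _ (Path.cons_isCycle ⟨q, hqp⟩ hvw.symm hqe)

lemma reach_of_avoid {v w : V} {u t : V} (p : G.Walk u t)
    (hav : v ∉ p.support ∨ w ∉ p.support) :
    (G.deleteEdges {s(v,w)}).Reachable u t := by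
  refine ⟨p.toDeleteEdges _ ?_⟩
  intro e he hmem
  rcases Set.mem_singleton_iff.mp hmem with rfl
  rcases hav with h | h
  · exact h (p.fst_mem_support_of_mem_edges he)
  · exact h (p.snd_mem_support_of_mem_edges he)

/-- walk in an induced subgraph yields a walk in G with support in S -/
lemma induce_walk {S : Set V} :
    ∀ {x y : ↥S} (_ : (G.induce S).Walk x y),
      ∃ w' : G.Walk x.1 y.1, ∀ u ∈ w'.support, u ∈ S := by
  intro x y p
  induction p with
  | nil => exact ⟨Walk.nil, by rintro u hu; simp at hu; subst hu; exact Subtype.coe_prop _⟩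
  | @cons x b y h p ih =>
    obtain ⟨w', hw'⟩ := ih
    refine ⟨Walk.cons h w', ?_⟩
    intro u hu
    rcases (List.mem_cons.mp hu : u = ↑x ∨ u ∈ w'.support) with rfl | hu
    · exact x.2
    · exact hw' u hu




variable {m : ℕ}

/-- Manhattan distance 1, as in gridDB. -/
def MD (p q : Fin m × Fin m) : Prop :=
  ((p.1.1 : ℤ) - (q.1.1 : ℤ)).natAbs + ((p.2.1 : ℤ) - (q.2.1 : ℤ)).natAbs = 1

lemma MD.symm {p q : Fin m × Fin m} (h : MD p q) : MD q p := by
  unfold MD at *; omega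

lemma MD_parity {p q : Fin m × Fin m} (h : MD p q) :
    Even (p.1.1 + p.2.1) ∨ Even (q.1.1 + q.2.1) := by
  rcases Nat.even_or_odd (p.1.1 + p.2.1) with hh | hh
  · exact Or.inl hh
  · right
    rw [Nat.even_iff]
    rw [Nat.odd_iff] at hh
    unfold MD at h
    omega

/-- the avoiding relation -/
def Rav (p₀ : Fin m × Fin m) (a b : Fin m × Fin m) : Prop :=
  MD a b ∧ a ≠ p₀ ∧ b ≠ p₀

lemma Rav.symmetric (p₀ : Fin m × Fin m) : Symmetric (Rav p₀) := by
  rintro a b ⟨h1, h2, h3⟩; exact ⟨h1.symm, h3, h2⟩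

lemma rtg_symm {p₀ : Fin m × Fin m} {a b : Fin m × Fin m}
    (h : Relation.ReflTransGen (Rav p₀) a b) : Relation.ReflTransGen (Rav p₀) b a :=
  by
    induction h with
    | refl => exact Relation.ReflTransGen.refl
    | tail _ hbc ih => exact Relation.ReflTransGen.head (Rav.symmetric p₀ hbc) ih

lemma rowReach {p₀ : Fin m × Fin m} (i : Fin m) (hi : i ≠ p₀.1) (j j' : Fin m) :
    Relation.ReflTransGen (Rav p₀) (i, j) (i, j') := by
  have hne : ∀ j'' : Fin m, (i, j'') ≠ p₀ := by
    intro j'' h; exact hi (by rw [← h])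
  -- suffices to do j.1 ≤ j'.1
  have main : ∀ (n : ℕ) (j j' : Fin m), j'.1 - j.1 ≤ n → j.1 ≤ j'.1 →
      Relation.ReflTransGen (Rav p₀) (i, j) (i, j') := by
    intro n
    induction n with
    | zero =>
      intro j j' h1 h2
      have : j = j' := Fin.ext (by omega)
      rw [this]
    | succ n ih =>
      intro j j' h1 h2
      by_cases he : j = j'
      · rw [he]
      · have hlt : j.1 < j'.1 := by
          rcases Nat.lt_or_ge j.1 j'.1 with h | h
          · exact h
          · exact absurd (Fin.ext (by omega)) he
        have hj1 : j.1 + 1 < m := lt_of_le_of_lt hlt j'.2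
        set jm : Fin m := ⟨j.1 + 1, hj1⟩ with hjm
        have hstep : Rav p₀ (i, j) (i, jm) := by
          refine ⟨?_, hne j, hne jm⟩
          unfold MD
          simp only [hjm]
          omega
        exact Relation.ReflTransGen.head hstep (ih jm j' (by simp [hjm]; omega) (by simp [hjm]; omega))
  rcases le_or_gt j.1 j'.1 with h | h
  · exact main (j'.1 - j.1) j j' le_rfl h
  · exact rtg_symm (main (j.1 - j'.1) j' j le_rfl (le_of_lt h))

lemma colReach {p₀ : Fin m × Fin m} (j : Fin m) (hj : j ≠ p₀.2) (i i' : Fin m) :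
    Relation.ReflTransGen (Rav p₀) (i, j) (i', j) := by
  have hne : ∀ i'' : Fin m, (i'', j) ≠ p₀ := by
    intro i'' h; exact hj (by rw [← h])
  have main : ∀ (n : ℕ) (i i' : Fin m), i'.1 - i.1 ≤ n → i.1 ≤ i'.1 →
      Relation.ReflTransGen (Rav p₀) (i, j) (i', j) := by
    intro n
    induction n with
    | zero =>
      intro i i' h1 h2
      have : i = i' := Fin.ext (by omega)
      rw [this]
    | succ n ih =>
      intro i i' h1 h2
      by_cases he : i = i'
      · rw [he]
      · have hlt : i.1 < i'.1 := by
          rcases Nat.lt_or_ge i.1 i'.1 with h | h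
          · exact h
          · exact absurd (Fin.ext (by omega)) he
        have hi1 : i.1 + 1 < m := lt_of_le_of_lt hlt i'.2
        set im : Fin m := ⟨i.1 + 1, hi1⟩ with him
        have hstep : Rav p₀ (i, j) (im, j) := by
          refine ⟨?_, hne i, hne im⟩
          unfold MD
          simp only [him]
          omega
        exact Relation.ReflTransGen.head hstep (ih im i' (by simp [him]; omega) (by simp [him]; omega))
  rcases le_or_gt i.1 i'.1 with h | h
  · exact main (i'.1 - i.1) i i' le_rfl h
  · exact rtg_symm (main (i.1 - i'.1) i' i le_rfl (le_of_lt h))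

lemma avoidConn (hm : 2 ≤ m) (p₀ p q : Fin m × Fin m) (hp : p ≠ p₀) (hq : q ≠ p₀) :
    Relation.ReflTransGen (Rav p₀) p q := by
  have h0 : (0 : ℕ) < m := by omega
  have h1 : (1 : ℕ) < m := by omega
  set istar : Fin m := if p₀.1 = ⟨0, h0⟩ then ⟨1, h1⟩ else ⟨0, h0⟩ with histar
  set jstar : Fin m := if p₀.2 = ⟨0, h0⟩ then ⟨1, h1⟩ else ⟨0, h0⟩ with hjstar
  have histar' : istar ≠ p₀.1 := by
    rw [histar]; split <;> rename_i h
    · rw [h]; intro hh; exact absurd (Fin.ext_iff.mp hh) (by norm_num)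
    · exact fun hh => h hh.symm
  have hjstar' : jstar ≠ p₀.2 := by
    rw [hjstar]; split <;> rename_i h
    · rw [h]; intro hh; exact absurd (Fin.ext_iff.mp hh) (by norm_num)
    · exact fun hh => h hh.symm
  have reach_c : ∀ x : Fin m × Fin m, x ≠ p₀ →
      Relation.ReflTransGen (Rav p₀) x (istar, jstar) := by
    intro x hx
    by_cases hx2 : x.2 = p₀.2
    · -- x is in the dangerous column, so its row is safe
      have hx1 : x.1 ≠ p₀.1 := by
        intro h; exact hx (Prod.ext h hx2)
      have w1 : Relation.ReflTransGen (Rav p₀) (x.1, x.2) (x.1, jstar) :=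
        rowReach x.1 hx1 x.2 jstar
      have w2 : Relation.ReflTransGen (Rav p₀) (x.1, jstar) (istar, jstar) :=
        colReach jstar hjstar' x.1 istar
      exact Relation.ReflTransGen.trans (by simpa using w1) w2
    · -- x's column is safe
      have w1 : Relation.ReflTransGen (Rav p₀) (x.1, x.2) (istar, x.2) :=
        colReach x.2 hx2 x.1 istar
      have w2 : Relation.ReflTransGen (Rav p₀) (istar, x.2) (istar, jstar) :=
        rowReach istar histar' x.2 jstar
      exact Relation.ReflTransGen.trans (by simpa using w1) w2
  exact Relation.ReflTransGen.trans (reach_c p hp) (rtg_symm (reach_c q hq))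

lemma third_point (hm : 2 ≤ m) (p q : Fin m × Fin m) :
    ∃ x : Fin m × Fin m, x ≠ p ∧ x ≠ q := by
  have h0 : (0 : ℕ) < m := by omega
  have h1 : (1 : ℕ) < m := by omega
  set a0 : Fin m × Fin m := (⟨0,h0⟩, ⟨0,h0⟩)
  set a1 : Fin m × Fin m := (⟨0,h0⟩, ⟨1,h1⟩)
  set a2 : Fin m × Fin m := (⟨1,h1⟩, ⟨0,h0⟩)
  have d01 : a0 ≠ a1 := by simp [a0, a1, Prod.ext_iff, Fin.ext_iff]
  have d02 : a0 ≠ a2 := by simp [a0, a2, Prod.ext_iff, Fin.ext_iff]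
  have d12 : a1 ≠ a2 := by simp [a1, a2, Prod.ext_iff, Fin.ext_iff]
  by_cases h0p : a0 = p
  · by_cases h1q : a1 = q
    · exact ⟨a2, by rw [← h0p]; exact d02.symm, by rw [← h1q]; exact d12.symm⟩
    · exact ⟨a1, by rw [← h0p]; exact d01.symm, h1q⟩
  · by_cases h0q : a0 = q
    · by_cases h1p : a1 = p
      · exact ⟨a2, by rw [← h1p]; exact d12.symm, by rw [← h0q]; exact d02.symm⟩
      · exact ⟨a1, h1p, by rw [← h0q]; exact d01.symm⟩
    · exact ⟨a0, h0p, h0q⟩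


end Stmt16Aux

/-- the canonical database of the grid CQ `q_m` (for `m ≥ 2`,
with pairwise distinct concept names `A_{i,j}`) has treewidth `(1, m²)`, but
there is no homomorphism from `q_m` into any interpretation `U` of treewidth
`(1, m²-1)` in which no element satisfies two distinct concept names
`A_{i,j}`. -/
theorem stmt16 {C R : Type} (m : ℕ) (hm : 2 ≤ m) (r : R)
    (Aname : Fin m × Fin m → C) (hinj : Function.Injective Aname) :
    HasTW (gridDB m r Aname) 1 (m ^ 2) ∧
    ∀ (B : Type), Nonempty B → ∀ U : Interp C R B, HasTW U 1 (m ^ 2 - 1) →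
      (∀ d p p', p ≠ p' → U.cn (Aname p) d → ¬ U.cn (Aname p') d) →
      ¬ Nonempty (Hom (gridDB m r Aname) U) := by
  constructor
  · -- Part 1: trivial one-bag decomposition
    refine ⟨⟨Unit, ⊥, ?_, ?_, fun _ => Set.univ, ?_, ?_, ?_, ?_, ?_⟩⟩
    · exact { preconnected := fun u v => by cases u; cases v; exact SimpleGraph.Reachable.refl _,
              nonempty := ⟨()⟩ }
    · intro v c hc
      cases c with
      | nil => simp at hc
      | cons h p => exact h.elim
    · intro a _
      exact { preconnected := fun u v => by
                have : u = v := Subsingleton.elim u v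
                rw [this],
              nonempty := ⟨⟨(), by simp⟩⟩ }
    · intro r a b _; exact ⟨(), by simp, by simp⟩
    · intro v; exact Set.finite_univ
    · intro v
      rw [Set.ncard_univ]
      simp [Nat.card_eq_fintype_card, pow_two]
    · intro v w h; exact absurd (Subsingleton.elim v w) h
  · -- Part 2
    rintro B hB U ⟨td⟩ hexcl ⟨hom⟩
    classical
    set g := hom.toFun with hg
    have ginj : Function.Injective g := by
      intro p p' h
      by_contra hne
      have h1 : U.cn (Aname p) (g p) := hom.map_cn _ _ rfl
      have h2 : U.cn (Aname p') (g p') := hom.map_cn _ _ rfl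
      rw [← h] at h2
      exact hexcl (g p) p p' hne h1 h2
    have hadom : ∀ x : Fin m × Fin m, g x ∈ U.adom :=
      fun x => Or.inl ⟨Aname x, hom.map_cn _ _ rfl⟩
    have hbag : ∀ {p q : Fin m × Fin m}, Stmt16Aux.MD p q →
        ∃ u, g p ∈ td.bag u ∧ g q ∈ td.bag u := by
      intro p q hmd
      rcases Stmt16Aux.MD_parity hmd with he | he
      · exact td.edges r (g p) (g q) (hom.map_rn r p q ⟨rfl, he, hmd⟩)
      · obtain ⟨u, h1, h2⟩ := td.edges r (g q) (g p) (hom.map_rn r q p ⟨rfl, he, hmd.symm⟩)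
        exact ⟨u, h2, h1⟩
    set Vx : Fin m × Fin m → Set td.V := fun x => {u | g x ∈ td.bag u} with hVx
    have hVne : ∀ x, (Vx x).Nonempty := by
      intro x
      obtain ⟨⟨u, hu⟩⟩ := (td.cover (g x) (hadom x)).nonempty
      exact ⟨u, hu⟩
    have hVcl : ∀ x, Stmt16Aux.Closed td.conn (Vx x) := by
      intro x x1 hx1 y1 hy1 u hu
      obtain ⟨w', hw'⟩ := Stmt16Aux.induce_walk
        (Classical.choice
          ((td.cover (g x) (hadom x)).preconnected ⟨x1, hx1⟩ ⟨y1, hy1⟩ :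
            Nonempty ((td.G.induce {v | g x ∈ td.bag v}).Walk ⟨x1, hx1⟩ ⟨y1, hy1⟩)))
      exact hw' u (Stmt16Aux.support_thePath_subset td.conn td.acyc w' hu)
    have hm4 : 4 ≤ m ^ 2 := by
      have : 2 * 2 ≤ m * m := Nat.mul_le_mul hm hm
      rw [pow_two]; omega
    have not_one : ¬ ∃ u, ∀ x : Fin m × Fin m, g x ∈ td.bag u := by
      rintro ⟨u, hu⟩
      have hsub : g '' Set.univ ⊆ td.bag u := by rintro _ ⟨x, -, rfl⟩; exact hu x
      have h1 : (g '' Set.univ).ncard ≤ (td.bag u).ncard := Set.ncard_le_ncard hsub (td.bagFin u)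
      rw [Set.ncard_image_of_injective _ ginj, Set.ncard_univ] at h1
      have h2 : Nat.card (Fin m × Fin m) = m ^ 2 := by
        simp [Nat.card_eq_fintype_card, pow_two]
      rw [h2] at h1
      have := td.bagCard u
      omega
    by_cases hpair : ∀ p q : Fin m × Fin m, (Vx p ∩ Vx q).Nonempty
    · -- all bag sets pairwise intersect: Helly gives a common bag
      set L : List (Set td.V) := (Finset.univ : Finset (Fin m × Fin m)).toList.map Vx with hL
      have hmem : ∀ x : Fin m × Fin m, Vx x ∈ L := by
        intro x; rw [hL]; exact List.mem_map_of_mem (f := Vx) (by simp)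
      have hLmem : ∀ S ∈ L, ∃ x, S = Vx x := by
        intro S hS; rw [hL] at hS
        obtain ⟨x, -, rfl⟩ := List.mem_map.mp hS
        exact ⟨x, rfl⟩
      have hLne : L ≠ [] := by
        intro h
        have := hmem (⟨0, by omega⟩, ⟨0, by omega⟩)
        rw [h] at this
        exact (List.not_mem_nil this)
      obtain ⟨u, hu⟩ := Stmt16Aux.helly td.conn td.acyc L.length L le_rfl hLne
        (fun S hS => by obtain ⟨x, rfl⟩ := hLmem S hS; exact ⟨hVcl x, hVne x⟩)
        (fun S hS T hT => by
          obtain ⟨x, rfl⟩ := hLmem S hS; obtain ⟨y, rfl⟩ := hLmem T hT; exact hpair x y)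
      exact not_one ⟨u, fun x => hu (Vx x) (hmem x)⟩
    · push_neg at hpair
      obtain ⟨p, q, hdisj⟩ := hpair
      obtain ⟨x₀, hx₀⟩ := hVne p
      obtain ⟨y₀, hy₀⟩ := hVne q
      have hy₀p : y₀ ∉ Vx p := fun h => by
        have hmm : y₀ ∈ Vx p ∩ Vx q := ⟨h, hy₀⟩
        rw [hdisj] at hmm; exact hmm
      obtain ⟨v, w, qw, hadjwv, hvS, hwS, hvq⟩ :=
        Stmt16Aux.split_first' (fun u => u ∈ Vx p) (Stmt16Aux.thePath td.conn y₀ x₀) hx₀ hy₀p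
      have hEdge : td.G.Adj v w := hadjwv.symm
      set G' := td.G.deleteEdges {s(v, w)} with hG'
      have hnotboth : ∀ u, G'.Reachable u v → G'.Reachable u w → False := by
        intro u h1 h2
        exact Stmt16Aux.side_not_both td.acyc hEdge (h1.symm.trans h2)
      have htotal : ∀ u, G'.Reachable u v ∨ G'.Reachable u w :=
        fun u => Stmt16Aux.side_total td.conn (v := v) (w := w) u
      have sideP : ∀ u ∈ Vx p, G'.Reachable u v := by
        intro u hu
        have hsupp : ∀ z ∈ (Stmt16Aux.thePath td.conn u v).support, z ∈ Vx p :=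
          fun z hz => hVcl p u hu v hvS z hz
        exact Stmt16Aux.reach_of_avoid (Stmt16Aux.thePath td.conn u v)
          (Or.inr (fun hmem => hwS (hsupp w hmem)))
      have hy₀w : G'.Reachable y₀ w := by
        have hwy : G'.Reachable w y₀ := Stmt16Aux.reach_of_avoid qw.reverse (Or.inl (by
          rw [SimpleGraph.Walk.support_reverse]; simpa using hvq))
        exact hwy.symm
      have sideQ : ∀ u ∈ Vx q, G'.Reachable u w := by
        intro u hu
        have hsupp : ∀ z ∈ (Stmt16Aux.thePath td.conn u y₀).support, z ∈ Vx q :=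
          fun z hz => hVcl q u hu y₀ hy₀ z hz
        have h1 : G'.Reachable u y₀ := Stmt16Aux.reach_of_avoid
          (Stmt16Aux.thePath td.conn u y₀) (Or.inl (fun hmem => by
            have h2 : v ∈ Vx q := hsupp v hmem
            have h3 : v ∈ Vx p ∩ Vx q := ⟨hvS, h2⟩
            rw [hdisj] at h3; exact h3))
        exact h1.trans hy₀w
      set HasV : Fin m × Fin m → Prop := fun a => ∃ u, u ∈ Vx a ∧ G'.Reachable u v with hHasV
      have hHp : HasV p := ⟨x₀, hx₀, sideP x₀ hx₀⟩
      have hHq : ¬ HasV q := by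
        rintro ⟨u, hu, hr⟩
        exact hnotboth u hr (sideQ u hu)
      have cross : ∀ a : Fin m × Fin m, (∃ u₁, u₁ ∈ Vx a ∧ G'.Reachable u₁ v) →
          (∃ u₂, u₂ ∈ Vx a ∧ G'.Reachable u₂ w) → g a ∈ td.bag v ∩ td.bag w := by
        rintro a ⟨u₁, hu₁, hr₁⟩ ⟨u₂, hu₂, hr₂⟩
        obtain ⟨w', hw'⟩ := Stmt16Aux.induce_walk
          (Classical.choice
            ((td.cover (g a) (hadom a)).preconnected ⟨u₁, hu₁⟩ ⟨u₂, hu₂⟩ :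
              Nonempty ((td.G.induce {z | g a ∈ td.bag z}).Walk ⟨u₁, hu₁⟩ ⟨u₂, hu₂⟩)))
        obtain ⟨c, d, hcd, hcW, hdW, hPc, hPd⟩ :=
          Stmt16Aux.walk_pair (fun z => G'.Reachable z v) w' hr₁ (fun h => hnotboth u₂ h hr₂)
        have hsvw : s(c, d) = s(v, w) := by
          by_contra hne
          have hadj : G'.Adj c d := SimpleGraph.deleteEdges_adj.mpr ⟨hcd, by simpa using hne⟩
          exact hPd (hadj.symm.reachable.trans hPc)
        rcases Sym2.eq_iff.mp hsvw with ⟨rfl, rfl⟩ | ⟨rfl, rfl⟩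
        · exact ⟨hw' _ hcW, hw' _ hdW⟩
        · exact absurd hPc (fun h => Stmt16Aux.side_not_both td.acyc hEdge h.symm)
      have hfin : (td.bag v ∩ td.bag w).Finite := (td.bagFin v).inter_of_left _
      have hone : ∀ z ∈ td.bag v ∩ td.bag w, ∀ z' ∈ td.bag v ∩ td.bag w, z = z' := by
        intro z hz z' hz'
        by_contra hne
        have h1 := (Set.one_lt_ncard hfin).mpr ⟨z, hz, z', hz', hne⟩
        have h2 := td.overlap v w hEdge.ne
        omega
      have main : ∀ p₀ : Fin m × Fin m, p ≠ p₀ → q ≠ p₀ →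
          ∃ a : Fin m × Fin m, a ≠ p₀ ∧ g a ∈ td.bag v ∩ td.bag w := by
        intro p₀ hp₀ hq₀
        obtain ⟨a, b, ⟨hab, hap₀, hbp₀⟩, hPa, hPb⟩ :=
          Stmt16Aux.rtg_pair _ HasV (Stmt16Aux.avoidConn hm p₀ p q hp₀ hq₀) hHp hHq
        obtain ⟨u, hua, hub⟩ := hbag hab
        have huw : G'.Reachable u w := by
          rcases htotal u with h | h
          · exact absurd ⟨u, hub, h⟩ hPb
          · exact h
        obtain ⟨u₁, hu₁, hr₁⟩ := hPa
        exact ⟨a, hap₀, cross a ⟨u₁, hu₁, hr₁⟩ ⟨u, hua, huw⟩⟩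
      by_cases hz : ∃ x : Fin m × Fin m, g x ∈ td.bag v ∩ td.bag w
      · obtain ⟨p₀, hp₀⟩ := hz
        have hpp₀ : p ≠ p₀ := by
          rintro rfl
          exact hnotboth w (sideP w hp₀.2) (SimpleGraph.Reachable.refl _)
        have hqp₀ : q ≠ p₀ := by
          rintro rfl
          exact Stmt16Aux.side_not_both td.acyc hEdge (sideQ v hp₀.1)
        obtain ⟨a, hap₀, ha⟩ := main p₀ hpp₀ hqp₀
        exact hap₀ (ginj (hone _ ha _ hp₀))
      · obtain ⟨p₀, hp₀p, hp₀q⟩ := Stmt16Aux.third_point hm p q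
        obtain ⟨a, -, ha⟩ := main p₀ (Ne.symm hp₀p) (Ne.symm hp₀q)
        exact hz ⟨a, ha⟩
end

section
/- In the OMQ language (ALCI, bELIQ), tree-database relaxing OMQ evaluation is at least as complete as ELI^u_⊥-ontology relaxing OMQ evaluation: for every OMQ Q(x̄) = (O, Σ, q) with O an ALCI ontology and q a bELIQ, every Σ-database D, and every ā ∈ adom(D)^{|x̄|}, if ā is a certain answer to (O≈, Σ, q) on D (with O≈ the set of all ELI^u_⊥ consequences of O), then ā ∈ app_{F∧}(Q, D), i.e., ā is a certain answer to Q on the unraveling D≈_ā. -/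
set_option autoImplicit false

attribute [local instance] Classical.propDecidable

namespace S17

variable {C R A : Type}

/-- Fact inclusion between interpretations. -/
def ILe {B : Type} (I J : Interp C R B) : Prop :=
  (∀ c x, I.cn c x → J.cn c x) ∧ (∀ r x y, I.rn r x y → J.rn r x y)

lemma ILe.rfl {B : Type} (I : Interp C R B) : ILe I I :=
  ⟨fun _ _ h => h, fun _ _ _ h => h⟩

lemma ILe.trans' {B : Type} {I J K : Interp C R B} (h1 : ILe I J) (h2 : ILe J K) :
    ILe I K :=
  ⟨fun c x h => h2.1 c x (h1.1 c x h), fun r x y h => h2.2 r x y (h1.2 r x y h)⟩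

lemma ILe.roleE' {B : Type} {I J : Interp C R B} (h : ILe I J) (ρ : R ⊕ R) {x y : B}
    (hr : I.roleE ρ x y) : J.roleE ρ x y := by
  cases ρ with
  | inl r => exact h.2 r x y hr
  | inr r => exact h.2 r y x hr

lemma sem_mono {B : Type} {I J : Interp C R B} (h : ILe I J) :
    ∀ (P : ELIU C R) (x : B), P.sem I x → P.sem J x
  | .top, _, _ => trivial
  | .bot, _, hx => hx.elim
  | .cn c, x, hx => h.1 c x hx
  | .inter X Y, x, hx => ⟨sem_mono h X x hx.1, sem_mono h Y x hx.2⟩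
  | .union X Y, x, hx =>
      hx.elim (fun h' => Or.inl (sem_mono h X x h')) (fun h' => Or.inr (sem_mono h Y x h'))
  | .exR ρ X, _, hx => by
      obtain ⟨b, hb, hXb⟩ := hx
      exact ⟨b, h.roleE' ρ hb, sem_mono h X b hXb⟩
  | .exU X, _, hx => by
      obtain ⟨b, hXb⟩ := hx
      exact ⟨b, sem_mono h X b hXb⟩

/-- Elements of the chase. -/
inductive CE (C R A : Type) : Type
  | base : A → CE C R A
  | node : CE C R A → (R ⊕ R) → ELIU C R → CE C R A
  | free : ELIU C R → CE C R A

instance : Nonempty (CE C R A) := ⟨CE.free ELIU.top⟩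

/-- The interpretation consisting of the single role fact `roleE ρ x y`. -/
def edgeI (ρ : R ⊕ R) (x y : CE C R A) : Interp C R (CE C R A) where
  cn _ _ := False
  rn r u v :=
    match ρ with
    | .inl r' => r = r' ∧ u = x ∧ v = y
    | .inr r' => r = r' ∧ u = y ∧ v = x

lemma edgeI_roleE {J : Interp C R (CE C R A)} {ρ : R ⊕ R} {x y : CE C R A}
    (h : ILe (edgeI ρ x y) J) : J.roleE ρ x y := by
  cases ρ with
  | inl r => exact h.2 r x y ⟨rfl, rfl, rfl⟩
  | inr r => exact h.2 r y x ⟨rfl, rfl, rfl⟩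

def iBot : Interp C R (CE C R A) := ⟨fun _ _ => False, fun _ _ _ => False⟩

def iSup (I J : Interp C R (CE C R A)) : Interp C R (CE C R A) where
  cn c x := I.cn c x ∨ J.cn c x
  rn r x y := I.rn r x y ∨ J.rn r x y

lemma iSup_le {I J K : Interp C R (CE C R A)} (h1 : ILe I K) (h2 : ILe J K) :
    ILe (iSup I J) K :=
  ⟨fun c x h => h.elim (h1.1 c x) (h2.1 c x), fun r x y h => h.elim (h1.2 r x y) (h2.2 r x y)⟩

lemma le_iSup_left (I J : Interp C R (CE C R A)) : ILe I (iSup I J) :=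
  ⟨fun _ _ h => Or.inl h, fun _ _ _ h => Or.inl h⟩

lemma le_iSup_right (I J : Interp C R (CE C R A)) : ILe J (iSup I J) :=
  ⟨fun _ _ h => Or.inr h, fun _ _ _ h => Or.inr h⟩

/-- Realization facts of an `ELI` concept at an element. -/
def rz : ELIU C R → CE C R A → Interp C R (CE C R A)
  | .top, _ => iBot
  | .bot, _ => iBot
  | .cn c, x => ⟨fun c' u => c' = c ∧ u = x, fun _ _ _ => False⟩
  | .inter X Y, x => iSup (rz X x) (rz Y x)
  | .union _ _, _ => iBot
  | .exR ρ P, x => iSup (edgeI ρ x (CE.node x ρ P)) (rz P (CE.node x ρ P))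
  | .exU P, _ => rz P (CE.free P)

/-- Realization works, provided the concept is satisfiable (witnessed in some
interpretation) and disjunction free. -/
lemma realize {W : Interp C R (CE C R A)} :
    ∀ (P : ELIU C R), P.disjFree → ∀ (x : CE C R A) {B : Type} {M : Interp C R B} {y : B},
      P.sem M y → ILe (rz P x) W → P.sem W x
  | .top, _, _, _, _, _, _, _ => trivial
  | .bot, _, _, _, _, _, hy, _ => hy.elim
  | .cn c, _, x, _, _, _, _, hle => hle.1 c x ⟨rfl, rfl⟩
  | .inter X Y, hd, x, _, _, _, hy, hle =>
      ⟨realize X hd.1 x hy.1 ((le_iSup_left _ _).trans' hle),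
       realize Y hd.2 x hy.2 ((le_iSup_right _ _).trans' hle)⟩
  | .union _ _, hd, _, _, _, _, _, _ => hd.elim
  | .exR ρ P, hd, x, _, _, _, hy, hle => by
      obtain ⟨b, _, hPb⟩ := hy
      exact ⟨CE.node x ρ P, edgeI_roleE ((le_iSup_left _ _).trans' hle),
        realize P hd (CE.node x ρ P) hPb ((le_iSup_right _ _).trans' hle)⟩
  | .exU P, hd, _, _, _, _, hy, hle => by
      obtain ⟨b, hPb⟩ := hy
      exact ⟨CE.free P, realize P hd (CE.free P) hPb hle⟩

end S17

namespace S17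

variable {C R A : Type}

section Chase

variable (O : Set (ALCI C R × ALCI C R)) (D : Interp C R A)

/-- One parallel chase step: fire all applicable `O≈`-inclusions. -/
def chaseStep (J : Interp C R (CE C R A)) : Interp C R (CE C R A) where
  cn c x := J.cn c x ∨ ∃ p ∈ ELIuApprox O, ∃ d, p.1.sem J d ∧ (rz p.2 d).cn c x
  rn r x y := J.rn r x y ∨ ∃ p ∈ ELIuApprox O, ∃ d, p.1.sem J d ∧ (rz p.2 d).rn r x y

/-- `D` embedded into the chase domain. -/
def emb : Interp C R (CE C R A) where
  cn c x := ∃ a, x = CE.base a ∧ D.cn c a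
  rn r x y := ∃ a b, x = CE.base a ∧ y = CE.base b ∧ D.rn r a b

def chase : ℕ → Interp C R (CE C R A)
  | 0 => emb D
  | n + 1 => chaseStep O (chase n)

def chaseW : Interp C R (CE C R A) where
  cn c x := ∃ n, (chase O D n).cn c x
  rn r x y := ∃ n, (chase O D n).rn r x y

lemma chase_le_succ (n : ℕ) : ILe (chase O D n) (chase O D (n + 1)) :=
  ⟨fun _ _ h => Or.inl h, fun _ _ _ h => Or.inl h⟩

lemma chase_le_chase {m n : ℕ} (h : m ≤ n) : ILe (chase O D m) (chase O D n) := by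
  induction n with
  | zero => cases Nat.le_zero.mp h; exact ILe.rfl _
  | succ n ih =>
      rcases Nat.lt_or_ge m (n + 1) with h' | h'
      · exact (ih (Nat.lt_succ_iff.mp h')).trans' (chase_le_succ O D n)
      · cases Nat.le_antisymm h h'
        exact ILe.rfl _

lemma chase_le_chaseW (n : ℕ) : ILe (chase O D n) (chaseW O D) :=
  ⟨fun c x h => ⟨n, h⟩, fun r x y h => ⟨n, h⟩⟩

/-- Compactness: a concept satisfied in the chase limit is satisfied at some stage. -/
lemma chaseW_compact :
    ∀ (P : ELIU C R) (x : CE C R A), P.sem (chaseW O D) x → ∃ n, P.sem (chase O D n) x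
  | .top, _, _ => ⟨0, trivial⟩
  | .bot, _, hx => hx.elim
  | .cn _, _, hx => hx
  | .inter X Y, x, hx => by
      obtain ⟨m, hm⟩ := chaseW_compact X x hx.1
      obtain ⟨n, hn⟩ := chaseW_compact Y x hx.2
      exact ⟨max m n, sem_mono (chase_le_chase O D (Nat.le_max_left m n)) X x hm,
        sem_mono (chase_le_chase O D (Nat.le_max_right m n)) Y x hn⟩
  | .union X Y, x, hx => by
      rcases hx with hx | hx
      · obtain ⟨n, hn⟩ := chaseW_compact X x hx
        exact ⟨n, Or.inl hn⟩
      · obtain ⟨n, hn⟩ := chaseW_compact Y x hx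
        exact ⟨n, Or.inr hn⟩
  | .exR ρ X, x, hx => by
      obtain ⟨b, hb, hXb⟩ := hx
      obtain ⟨m, hm⟩ : ∃ m, (chase O D m).roleE ρ x b := by
        cases ρ with
        | inl r => exact hb
        | inr r => exact hb
      obtain ⟨n, hn⟩ := chaseW_compact X b hXb
      refine ⟨max m n, b, (chase_le_chase O D (Nat.le_max_left m n)).roleE' ρ hm,
        sem_mono (chase_le_chase O D (Nat.le_max_right m n)) X b hn⟩
  | .exU X, x, hx => by
      obtain ⟨b, hXb⟩ := hx
      obtain ⟨n, hn⟩ := chaseW_compact X b hXb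
      exact ⟨n, b, hn⟩

/-- The rz-facts of a fired trigger are contained in the next stage. -/
lemma rz_le_step {p : ELIU C R × ELIU C R} (hp : p ∈ ELIuApprox O) {J : Interp C R (CE C R A)}
    {d : CE C R A} (hd : p.1.sem J d) : ILe (rz p.2 d) (chaseStep O J) :=
  ⟨fun c x hf => Or.inr ⟨p, hp, d, hd, hf⟩, fun r x y hf => Or.inr ⟨p, hp, d, hd, hf⟩⟩

/-- The base embedding is a homomorphism into the chase limit. -/
def homBase : Hom D (chaseW O D) where
  toFun := CE.base
  map_cn c a hc := ⟨0, a, rfl, hc⟩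
  map_rn r a b hr := ⟨0, a, b, rfl, rfl, hr⟩

end Chase

end S17

namespace S17

variable {C R A : Type}

section Sim

variable {D : Interp C R A} {S : Set A} {Δ : Type} {I : Interp C R Δ}

/-- `z` is a copy of `a` in the tree unraveling `D≈_S`. -/
def Copy (D : Interp C R A) (S : Set A) (a : A) (z : A ⊕ (Σ a : A, UPath D a)) : Prop :=
  (a ∈ S ∧ z = Sum.inl a) ∨ ∃ p : UPath D a, z = Sum.inr ⟨a, p⟩

lemma copy_nil (a : A) : Copy D S a (Sum.inr ⟨a, UPath.nil a⟩) :=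
  Or.inr ⟨UPath.nil a, rfl⟩

lemma copy_cn {c : C} {a : A} (hc : D.cn c a) {z} (hz : Copy D S a z) :
    (treeUnravel D S).cn c z := by
  rcases hz with ⟨hS, rfl⟩ | ⟨p, rfl⟩
  · exact ⟨hS, hc⟩
  · exact hc

/-- Every copy of `a` has, along every role edge of `D`, an adjacent copy. -/
lemma copyStep {ρ : R ⊕ R} {a b : A} (hab : D.roleE ρ a b) {z} (hz : Copy D S a z) :
    ∃ z', Copy D S b z' ∧ (treeUnravel D S).roleE ρ z z' := by
  cases ρ with
  | inl r =>
    rcases hz with ⟨hS, rfl⟩ | ⟨p, rfl⟩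
    · exact ⟨Sum.inr ⟨b, UPath.nil b⟩, copy_nil b,
        Or.inr (Or.inr (Or.inr (Or.inl ⟨a, b, UPath.nil b, hS, hab, rfl, rfl⟩)))⟩
    · exact ⟨Sum.inr ⟨b, p.cons (Sum.inl r) b hab⟩, Or.inr ⟨_, rfl⟩,
        Or.inr (Or.inl ⟨a, p, b, hab, rfl, rfl⟩)⟩
  | inr r =>
    -- hab : D.rn r b a
    rcases hz with ⟨hS, rfl⟩ | ⟨p, rfl⟩
    · refine ⟨Sum.inr ⟨b, UPath.nil b⟩, copy_nil b, ?_⟩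
      show (treeUnravel D S).rn r (Sum.inr ⟨b, UPath.nil b⟩) (Sum.inl a)
      exact Or.inr (Or.inr (Or.inr (Or.inr ⟨a, b, UPath.nil b, hS, hab, rfl, rfl⟩)))
    · refine ⟨Sum.inr ⟨b, p.cons (Sum.inr r) b hab⟩, Or.inr ⟨_, rfl⟩, ?_⟩
      show (treeUnravel D S).rn r (Sum.inr ⟨b, p.cons (Sum.inr r) b hab⟩) (Sum.inr ⟨a, p⟩)
      exact Or.inr (Or.inr (Or.inl ⟨a, p, b, hab, rfl, rfl⟩))

variable (I)

/-- The simulation from chase elements into `I`, relative to a homomorphism `g`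
from the unraveling into `I` and a default element `y₀`. -/
def Sim (g : Hom (treeUnravel D S) I) (y₀ : Δ) : CE C R A → Δ → Prop
  | .base a, y => ∃ z, Copy D S a z ∧ y = g.toFun z
  | .node x ρ P, y' =>
      ((∃ y, Sim g y₀ x y ∧ I.roleE ρ y y') ∧ P.sem I y') ∨
        ((¬ ∃ y'', (∃ y, Sim g y₀ x y ∧ I.roleE ρ y y'') ∧ P.sem I y'') ∧ y' = y₀)
  | .free P, y' => P.sem I y' ∨ ((¬ ∃ y'', P.sem I y'') ∧ y' = y₀)

variable {I}

variable {g : Hom (treeUnravel D S) I} {y₀ : Δ}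

lemma sim_total : ∀ x : CE C R A, ∃ y, Sim I g y₀ x y
  | .base a => ⟨g.toFun (Sum.inr ⟨a, UPath.nil a⟩), _, copy_nil a, rfl⟩
  | .node x ρ P => by
      by_cases h : ∃ y'', (∃ y, Sim I g y₀ x y ∧ I.roleE ρ y y'') ∧ P.sem I y''
      · obtain ⟨y'', hy⟩ := h
        exact ⟨y'', Or.inl hy⟩
      · exact ⟨y₀, Or.inr ⟨h, rfl⟩⟩
  | .free P => by
      by_cases h : ∃ y'', P.sem I y''
      · obtain ⟨y'', hy⟩ := h
        exact ⟨y'', Or.inl hy⟩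
      · exact ⟨y₀, Or.inr ⟨h, rfl⟩⟩

variable (I g y₀)

/-- The invariant: facts of `J` are simulated in `I`. -/
def GoodI (J : Interp C R (CE C R A)) : Prop :=
  (∀ c x y, J.cn c x → Sim I g y₀ x y → I.cn c y) ∧
  (∀ (ρ : R ⊕ R) x x' y, J.roleE ρ x x' → Sim I g y₀ x y →
    ∃ y', I.roleE ρ y y' ∧ Sim I g y₀ x' y')

variable {I g y₀}

/-- Transfer of concepts along the simulation. -/
lemma transfer {J : Interp C R (CE C R A)} (hG : GoodI I g y₀ J) :
    ∀ (P : ELIU C R) (x : CE C R A) (y : Δ), P.sem J x → Sim I g y₀ x y → P.sem I y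
  | .top, _, _, _, _ => trivial
  | .bot, _, _, hx, _ => hx.elim
  | .cn c, x, y, hx, hs => hG.1 c x y hx hs
  | .inter X Y, x, y, hx, hs =>
      ⟨transfer hG X x y hx.1 hs, transfer hG Y x y hx.2 hs⟩
  | .union X Y, x, y, hx, hs =>
      hx.elim (fun h' => Or.inl (transfer hG X x y h' hs))
        (fun h' => Or.inr (transfer hG Y x y h' hs))
  | .exR ρ X, x, y, hx, hs => by
      obtain ⟨b, hb, hXb⟩ := hx
      obtain ⟨y', hy', hs'⟩ := hG.2 ρ x b y hb hs
      exact ⟨y', hy', transfer hG X b y' hXb hs'⟩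
  | .exU X, x, y, hx, _ => by
      obtain ⟨b, hXb⟩ := hx
      obtain ⟨y', hs'⟩ := sim_total b
      exact ⟨y', transfer hG X b y' hXb hs'⟩

/-- The realization facts of a supported concept respect the simulation. -/
lemma good_rz :
    ∀ (P : ELIU C R) (x : CE C R A), (∀ y, Sim I g y₀ x y → P.sem I y) →
      GoodI I g y₀ (rz P x)
  | .top, _, _ => ⟨fun _ _ _ h => h.elim, fun ρ _ _ _ h => by cases ρ <;> exact h.elim⟩
  | .bot, _, _ => ⟨fun _ _ _ h => h.elim, fun ρ _ _ _ h => by cases ρ <;> exact h.elim⟩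
  | .union _ _, _, _ =>
      ⟨fun _ _ _ h => h.elim, fun ρ _ _ _ h => by cases ρ <;> exact h.elim⟩
  | .cn c, x, H => by
      refine ⟨?_, fun ρ _ _ _ h => by cases ρ <;> exact h.elim⟩
      rintro c' x' y ⟨rfl, rfl⟩ hs
      exact H y hs
  | .inter X Y, x, H => by
      have hX := good_rz X x (fun y hy => (H y hy).1)
      have hY := good_rz Y x (fun y hy => (H y hy).2)
      exact ⟨fun c u y hf hs => hf.elim (fun h' => hX.1 c u y h' hs) (fun h' => hY.1 c u y h' hs),
        fun ρ u v y hf hs => by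
          cases ρ with
          | inl r => exact hf.elim (fun h' => hX.2 _ u v y h' hs) (fun h' => hY.2 _ u v y h' hs)
          | inr r => exact hf.elim (fun h' => hX.2 _ u v y h' hs) (fun h' => hY.2 _ u v y h' hs)⟩
  | .exR ρ P, x, H => by
      -- the node cannot be in fallback mode
      have hex : ∃ y'', (∃ y, Sim I g y₀ x y ∧ I.roleE ρ y y'') ∧ P.sem I y'' := by
        obtain ⟨y, hy⟩ := sim_total (g := g) (y₀ := y₀) x
        obtain ⟨y', hr, hP⟩ := H y hy
        exact ⟨y', ⟨y, hy, hr⟩, hP⟩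
      have simNode : ∀ y', Sim I g y₀ (CE.node x ρ P) y' ↔
          ((∃ y, Sim I g y₀ x y ∧ I.roleE ρ y y') ∧ P.sem I y') := by
        intro y'
        constructor
        · rintro (h | ⟨hn, _⟩)
          · exact h
          · exact absurd hex hn
        · exact Or.inl
      have hrec := good_rz P (CE.node x ρ P) (fun y' hy' => ((simNode y').mp hy').2)
      constructor
      · rintro c u y (hf | hf) hs
        · exact hf.elim
        · exact hrec.1 c u y hf hs
      · intro ρ' u v y hf hs
        have hedge : ∀ (hE : (edgeI ρ x (CE.node x ρ P)).roleE ρ' u v),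
            ∃ y', I.roleE ρ' y y' ∧ Sim I g y₀ v y' := by
          intro hE
          have huv : (u = x ∧ v = CE.node x ρ P ∧ ρ' = ρ) ∨
              (u = CE.node x ρ P ∧ v = x ∧ ∀ w w', I.roleE ρ w w' ↔ I.roleE ρ' w' w) := by
            cases ρ with
            | inl r =>
              cases ρ' with
              | inl r' =>
                obtain ⟨rfl, rfl, rfl⟩ := hE
                exact Or.inl ⟨rfl, rfl, rfl⟩
              | inr r' =>
                obtain ⟨rfl, rfl, rfl⟩ := hE
                exact Or.inr ⟨rfl, rfl, fun w w' => Iff.rfl⟩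
            | inr r =>
              cases ρ' with
              | inl r' =>
                obtain ⟨rfl, rfl, rfl⟩ := hE
                exact Or.inr ⟨rfl, rfl, fun w w' => Iff.rfl⟩
              | inr r' =>
                obtain ⟨rfl, rfl, rfl⟩ := hE
                exact Or.inl ⟨rfl, rfl, rfl⟩
          rcases huv with ⟨rfl, rfl, rfl⟩ | ⟨rfl, rfl, hiff⟩
          · obtain ⟨y', hr, hP⟩ := H y hs
            exact ⟨y', hr, (simNode y').mpr ⟨⟨y, hs, hr⟩, hP⟩⟩
          · obtain ⟨⟨y₁, hy₁, hr⟩, _⟩ := (simNode y).mp hs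
            exact ⟨y₁, (hiff y₁ y).mp hr, hy₁⟩
        cases ρ' with
        | inl r' =>
          rcases hf with hf | hf
          · exact hedge hf
          · exact hrec.2 _ u v y hf hs
        | inr r' =>
          rcases hf with hf | hf
          · exact hedge hf
          · exact hrec.2 _ u v y hf hs
  | .exU P, x, H => by
      have hex : ∃ y'', P.sem I y'' := by
        obtain ⟨y, hy⟩ := sim_total (g := g) (y₀ := y₀) x
        exact H y hy
      have simFree : ∀ y', Sim I g y₀ (CE.free P) y' ↔ P.sem I y' := by
        intro y'
        constructor
        · rintro (h | ⟨hn, _⟩)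
          · exact h
          · exact absurd hex hn
        · exact Or.inl
      exact good_rz P (CE.free P) (fun y' hy' => (simFree y').mp hy')

end Sim

end S17

namespace S17

variable {C R A : Type}

section Main

variable {O : Set (ALCI C R × ALCI C R)} {D : Interp C R A} {S : Set A}
  {Δ : Type} {I : Interp C R Δ} {g : Hom (treeUnravel D S) I} {y₀ : Δ}

lemma good_emb : GoodI I g y₀ (emb D) := by
  constructor
  · rintro c x y ⟨a, rfl, hc⟩ ⟨z, hz, rfl⟩
    exact g.map_cn c z (copy_cn hc hz)
  · intro ρ x x' y hf hs
    have hstep : ∀ (a b : A), x = CE.base a → x' = CE.base b → D.roleE ρ a b →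
        ∃ y', I.roleE ρ y y' ∧ Sim I g y₀ x' y' := by
      rintro a b rfl rfl hab
      obtain ⟨z, hz, rfl⟩ := hs
      obtain ⟨z', hz', he⟩ := copyStep hab hz
      refine ⟨g.toFun z', ?_, z', hz', rfl⟩
      cases ρ with
      | inl r => exact g.map_rn r z z' he
      | inr r => exact g.map_rn r z' z he
    cases ρ with
    | inl r =>
      obtain ⟨a, b, rfl, rfl, hab⟩ := hf
      exact hstep a b rfl rfl hab
    | inr r =>
      obtain ⟨a, b, rfl, rfl, hab⟩ := hf
      exact hstep b a rfl rfl hab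

lemma good_chase (hne : Nonempty Δ) (hI : ModelsALCIOnt I O) :
    ∀ n, GoodI I g y₀ (chase O D n) := by
  intro n
  induction n with
  | zero => exact good_emb
  | succ n ih =>
    have hfire : ∀ p ∈ ELIuApprox O, ∀ d : CE C R A, p.1.sem (chase O D n) d →
        GoodI I g y₀ (rz p.2 d) := by
      intro p hp d hd
      refine good_rz p.2 d (fun y hy => ?_)
      exact hp.2.2 Δ hne I hI y (transfer ih p.1 d y hd hy)
    constructor
    · rintro c x y (hf | ⟨p, hp, d, hd, hf⟩) hs
      · exact ih.1 c x y hf hs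
      · exact (hfire p hp d hd).1 c x y hf hs
    · intro ρ x x' y hf hs
      have hf' : (chase O D n).roleE ρ x x' ∨
          ∃ p ∈ ELIuApprox O, ∃ d, p.1.sem (chase O D n) d ∧ (rz p.2 d).roleE ρ x x' := by
        cases ρ with
        | inl r => exact hf
        | inr r => exact hf
      rcases hf' with hf' | ⟨p, hp, d, hd, hf'⟩
      · exact ih.2 ρ x x' y hf' hs
      · exact (hfire p hp d hd).2 ρ x x' y hf' hs

lemma good_chaseW (hne : Nonempty Δ) (hI : ModelsALCIOnt I O) :
    GoodI I g y₀ (chaseW O D) := by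
  constructor
  · rintro c x y ⟨n, hf⟩ hs
    exact (good_chase hne hI n).1 c x y hf hs
  · intro ρ x x' y hf hs
    have hf' : ∃ n, (chase O D n).roleE ρ x x' := by
      cases ρ with
      | inl r => exact hf
      | inr r => exact hf
    obtain ⟨n, hf'⟩ := hf'
    exact (good_chase hne hI n).2 ρ x x' y hf' hs

/-- The chase limit is a model of `O≈`. -/
lemma chaseW_models (g : Hom (treeUnravel D S) I) (y₀ : Δ)
    (hne : Nonempty Δ) (hI : ModelsALCIOnt I O) :
    ModelsELIUOnt (chaseW O D) (ELIuApprox O) := by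
  intro p hp x hx
  obtain ⟨n, hn⟩ := chaseW_compact O D p.1 x hx
  have hle : ILe (rz p.2 x) (chaseW O D) :=
    (rz_le_step O hp hn).trans' (chase_le_chaseW O D (n + 1))
  obtain ⟨y, hy⟩ := sim_total (g := g) (y₀ := y₀) x
  have hIy : p.2.sem I y :=
    hp.2.2 Δ hne I hI y (transfer (good_chase hne hI n) p.1 x y hn hy)
  exact realize p.2 hp.2.1 x hIy hle

end Main

end S17

/-- in `(ALCI, bELIQ)`, tree-database relaxing OMQ evaluation is
at least as complete as `ELI^u_⊥`-ontology relaxing OMQ evaluation: if `t` is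
a certain answer to `(O≈, Σ, q)` on `D`, then `t` is a certain answer to `Q`
on the tree unraveling `D≈_t` (i.e. `t ∈ app_{F∧}(Q,D)`). -/
theorem stmt17 {C R A : Type} (O : Set (ALCI C R × ALCI C R)) (hOfin : O.Finite)
    (SC : Set C) (SR : Set R) (q : BELIQ C R) (hq : q.wf)
    (D : Interp C R A) (hfin : D.FiniteFacts) (hsig : D.InSig SC SR)
    (t : Fin q.arity → A) (ht : ∀ i, t i ∈ D.adom)
    (h : Certain (fun _ I => ModelsELIUOnt I (ELIuApprox O)) D
        (fun _ I v => q.Eval I v) t) :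
    Certain (fun _ I => ModelsALCIOnt I O) (treeUnravel D (Set.range t))
      (fun _ I v => q.Eval I v) (fun i => Sum.inl (t i)) := by
  intro Δ hne I hI g
  obtain ⟨y₀⟩ := hne
  have hmod : ModelsELIUOnt (S17.chaseW O D) (ELIuApprox O) :=
    S17.chaseW_models g y₀ ⟨y₀⟩ hI
  have hq' := h (S17.CE C R A) inferInstance (S17.chaseW O D) hmod (S17.homBase O D)
  have hG := S17.good_chaseW (g := g) (y₀ := y₀) ⟨y₀⟩ hI
  cases q with
  | q1 X =>
    have hsim : S17.Sim I g y₀ (S17.CE.base (t ⟨0, Nat.zero_lt_one⟩))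
        (g.toFun (Sum.inl (t ⟨0, Nat.zero_lt_one⟩))) :=
      ⟨Sum.inl (t ⟨0, Nat.zero_lt_one⟩), Or.inl ⟨⟨⟨0, Nat.zero_lt_one⟩, rfl⟩, rfl⟩, rfl⟩
    exact S17.transfer hG X _ _ hq' hsim
  | q0 X =>
    obtain ⟨a, ha⟩ := hq'
    obtain ⟨y, hy⟩ := S17.sim_total (g := g) (y₀ := y₀) a
    exact ⟨y, S17.transfer hG X a y ha hy⟩
end

section
/- Let O = {Aᵢ ⊓ Aⱼ ⊑ B : 1 ≤ i < j ≤ 3}, Σ = {A₁, A₂, A₃, B, r}, q = ∃x B(x), and D = {r(a₁,a₂), r(a₂,a₃), r(a₃,a₁), A₁(a₁), A₂(a₂), A₃(a₃)}. Then () ∈ app↑_{F₁}(Q, D) but () is not a certain answer to Q = (O, Σ, q) on D. That is: (1) for every database D' obtained from D by a homomorphism (equivalently, by identifying constants) such that D' has treewidth (1,2), the certain answer () to Q on D' holds; and (2) there is a model of O and D in which no element satisfies B. -/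
set_option autoImplicit false

attribute [local instance] Classical.propDecidable

/-! ### Auxiliary lemmas for Statement 19 -/

/-- Along any path ending in `T`, there is a first vertex belonging to `T`. -/
lemma exists_first_mem {V : Type} {G : SimpleGraph V} {x y : V} (p : G.Walk x y)
    (hp : p.IsPath) (T : Set V) (hy : y ∈ T) :
    ∃ (m : V) (p₁ : G.Walk x m), p₁.IsPath ∧ m ∈ T ∧
      (∀ u ∈ p₁.support, u ∈ T → u = m) ∧ p₁.support ⊆ p.support := by
  match p with
  | SimpleGraph.Walk.nil =>
    exact ⟨x, SimpleGraph.Walk.nil, SimpleGraph.Walk.IsPath.nil, hy,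
      by intro u hu _; simpa using hu, by simp⟩
  | @SimpleGraph.Walk.cons _ _ a b _ h q =>
    by_cases hx : a ∈ T
    · exact ⟨a, SimpleGraph.Walk.nil, SimpleGraph.Walk.IsPath.nil, hx,
        by intro u hu _; simpa using hu, by simp⟩
    · obtain ⟨hq, hnot⟩ := (SimpleGraph.Walk.cons_isPath_iff h q).1 hp
      obtain ⟨m, p₁, hp₁, hm, hfirst, hsub⟩ := exists_first_mem q hq T hy
      refine ⟨m, SimpleGraph.Walk.cons h p₁, hp₁.cons (fun hc => hnot (hsub hc)), hm,
        ?_, ?_⟩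
      · intro u hu huT
        rcases (by simpa using hu : u = a ∨ u ∈ p₁.support) with rfl | hu'
        · exact absurd huT hx
        · exact hfirst u hu' huT
      · intro u hu
        rcases (by simpa using hu : u = a ∨ u ∈ p₁.support) with rfl | hu'
        · simp
        · simp [hsub hu']

/-- Median of three paths in an acyclic graph. -/
lemma median_exists {V : Type} {G : SimpleGraph V} (ha : G.IsAcyclic)
    {x y z : V} (p : G.Walk x y) (q : G.Walk y z) (s : G.Walk x z)
    (hp : p.IsPath) (hq : q.IsPath) (hs : s.IsPath) :
    ∃ m, m ∈ p.support ∧ m ∈ q.support ∧ m ∈ s.support := by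
  obtain ⟨m, p₁, hp₁, hm, hfirst, hsub⟩ :=
    exists_first_mem p hp {v | v ∈ q.support} q.start_mem_support
  have hmq : m ∈ q.support := hm
  set q₂ := q.dropUntil m hmq with hq₂
  have hq₂p : q₂.IsPath := hq.dropUntil hmq
  have hmtail : m ∉ q₂.support.tail := by
    have h1 := hq₂p.support_nodup
    rw [q₂.support_eq_cons] at h1
    exact (List.nodup_cons.1 h1).1
  have hw : (p₁.append q₂).IsPath := by
    rw [SimpleGraph.Walk.isPath_def, SimpleGraph.Walk.support_append]
    refine List.Nodup.append hp₁.support_nodup hq₂p.support_nodup.tail ?_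
    intro u hu1 hu2
    have huq : u ∈ q.support :=
      SimpleGraph.Walk.support_dropUntil_subset q hmq (List.mem_of_mem_tail hu2)
    have := hfirst u hu1 huq
    subst this
    exact hmtail hu2
  have heq : s = p₁.append q₂ := by
    have := ha.path_unique ⟨s, hs⟩ ⟨p₁.append q₂, hw⟩
    exact congrArg Subtype.val this
  refine ⟨m, hsub p₁.end_mem_support, hmq, ?_⟩
  rw [heq]
  exact (SimpleGraph.Walk.mem_support_append_iff _ _).2 (Or.inl p₁.end_mem_support)

/-- If the subgraph induced on `T` is connected, any two members of `T` are joined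
by a path all of whose vertices lie in `T`. -/
lemma path_in_set {V : Type} {G : SimpleGraph V} (T : Set V)
    (hT : (G.induce T).Connected) {x y : V} (hx : x ∈ T) (hy : y ∈ T) :
    ∃ p : G.Walk x y, p.IsPath ∧ ∀ u ∈ p.support, u ∈ T := by
  obtain ⟨w⟩ := hT.preconnected ⟨x, hx⟩ ⟨y, hy⟩
  let f : G.induce T →g G := (SimpleGraph.Embedding.induce T).toHom
  have hmap : ∀ u ∈ (w.map f).support, u ∈ T := by
    intro u hu
    rw [SimpleGraph.Walk.support_map] at hu
    obtain ⟨v, _, rfl⟩ := List.mem_map.1 hu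
    exact v.2
  exact ⟨(w.map f).bypass, (w.map f).bypass_isPath,
    fun u hu => hmap u ((w.map f).support_bypass_subset hu)⟩

/-- A database of treewidth `(1,2)` contains no triangle of `r`-edges on three
distinct elements. -/
lemma no_triangle {C R A : Type} (I : Interp C R A) (htw : HasTW I 1 2)
    {r : R} {a b c : A} (hab : a ≠ b) (hbc : b ≠ c) (hac : a ≠ c)
    (e1 : I.rn r a b) (e2 : I.rn r b c) (e3 : I.rn r c a) : False := by
  obtain ⟨td⟩ := htw
  obtain ⟨vab, hvab_a, hvab_b⟩ := td.edges r a b e1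
  obtain ⟨vbc, hvbc_b, hvbc_c⟩ := td.edges r b c e2
  obtain ⟨vca, hvca_c, hvca_a⟩ := td.edges r c a e3
  have hadom_a : a ∈ I.adom := Or.inr (Or.inl ⟨r, b, e1⟩)
  have hadom_b : b ∈ I.adom := Or.inr (Or.inl ⟨r, c, e2⟩)
  have hadom_c : c ∈ I.adom := Or.inr (Or.inl ⟨r, a, e3⟩)
  obtain ⟨p, hp, hpT⟩ := path_in_set _ (td.cover b hadom_b) hvab_b hvbc_b
  obtain ⟨q, hq, hqT⟩ := path_in_set _ (td.cover c hadom_c) hvbc_c hvca_c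
  obtain ⟨s, hs, hsT⟩ := path_in_set _ (td.cover a hadom_a) hvab_a hvca_a
  obtain ⟨m, hmp, hmq, hms⟩ := median_exists td.acyc p q s hp hq hs
  have h3 : ({a, b, c} : Set A) ⊆ td.bag m := by
    intro u hu
    rcases hu with rfl | rfl | rfl
    · exact hsT m hms
    · exact hpT m hmp
    · exact hqT m hmq
  have hle : ({a, b, c} : Set A).ncard ≤ 2 :=
    le_trans (Set.ncard_le_ncard h3 (td.bagFin m)) (td.bagCard m)
  have h3card : ({a, b, c} : Set A).ncard = 3 := by
    rw [Set.ncard_insert_of_notMem (by simp [hab, hac]),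
      Set.ncard_insert_of_notMem (by simp [hbc]), Set.ncard_singleton]
  omega

/-- for `O = {Aᵢ ⊓ Aⱼ ⊑ B : i < j}`, `q = ∃x B(x)` and the
3-cycle database `D`: (1) for every database `D'` of treewidth `(1,2)` to
which `D` maps homomorphically, `()` is a certain answer to `Q` on `D'` (so
`() ∈ app↑_{F₁}(Q,D)`); but (2) there is a model of `O` and `D` in which no
element satisfies `B` (so `()` is not a certain answer to `Q` on `D`). -/
theorem stmt19 {C R : Type} (nA : Fin 3 → C) (nB : C) (r : R)
    (hinj : Function.Injective nA) (hB : ∀ i, nA i ≠ nB) :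
    (∀ (B : Type), Nonempty B → ∀ D' : Interp C R B, D'.FiniteFacts →
      HasTW D' 1 2 → Nonempty (Hom (cycleDB nA r) D') →
      Certain (fun _ I => ModelsELIUOnt I (cycleOnt (R := R) nA nB)) D'
        (fun _ I v => (existsB (R := R) nB).Eval I v) (fun i => i.elim0)) ∧
    (∃ (Δ : Type) (_ : Nonempty Δ) (I : Interp C R Δ)
        (_ : Hom (cycleDB nA r) I),
      ModelsELIUOnt I (cycleOnt (R := R) nA nB) ∧ ∀ d, ¬ I.cn nB d) := by
  constructor
  · -- Part (1)
    rintro B _ D' _ hTW ⟨f⟩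
    have e01 : D'.rn r (f.toFun 0) (f.toFun 1) := f.map_rn r 0 1 ⟨rfl, by decide⟩
    have e12 : D'.rn r (f.toFun 1) (f.toFun 2) := f.map_rn r 1 2 ⟨rfl, by decide⟩
    have e20 : D'.rn r (f.toFun 2) (f.toFun 0) := f.map_rn r 2 0 ⟨rfl, by decide⟩
    have hc : ∀ i : Fin 3, D'.cn (nA i) (f.toFun i) := fun i => f.map_cn (nA i) i rfl
    have key : ∃ i j : Fin 3, i < j ∧ f.toFun i = f.toFun j := by
      by_contra hcon
      push_neg at hcon
      exact no_triangle D' hTW (hcon 0 1 (by decide)) (hcon 1 2 (by decide))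
        (hcon 0 2 (by decide)) e01 e12 e20
    obtain ⟨i, j, hij, heq⟩ := key
    intro Δ _ I hMod hm
    set x := hm.toFun (f.toFun i) with hx
    have hAi : I.cn (nA i) x := hm.map_cn _ _ (hc i)
    have hAj : I.cn (nA j) x := by
      have := hm.map_cn (nA j) (f.toFun j) (hc j)
      rwa [← heq] at this
    have hBx : I.cn nB x := hMod _ ⟨i, j, hij, rfl⟩ x ⟨hAi, hAj⟩
    refine ⟨fun _ => x, fun i => i.elim0, ?_, ?_⟩
    · intro p hp
      have hp' : p = (nB, Sum.inr ()) := hp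
      subst hp'
      exact hBx
    · intro t ht
      exact ht.elim
  · -- Part (2)
    refine ⟨Fin 3, ⟨0⟩, cycleDB nA r,
      ⟨id, fun c a h => h, fun ρ a b h => h⟩, ?_, ?_⟩
    · rintro p ⟨i, j, hij, rfl⟩ a ⟨h1, h2⟩
      have h1' : nA i = nA a := h1
      have h2' : nA j = nA a := h2
      exact ((Fin.lt_iff_le_and_ne.1 hij).2 (hinj (h1'.trans h2'.symm))).elim
    · intro d hd
      exact hB d ((show nB = nA d from hd).symm)
end
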